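/- arXiv:1101.0373 — 7 statements merged into one kernel-verified Lean document; each statement's English description precedes it below -/
import Mathlib

section
/- Let L be a selfadjoint operator in a Hilbert space H that is bounded below, and let A ⊆ H be a total subset of H (i.e., the linear span of A is dense). Then the infimum of the spectrum of L satisfies E0(L) = inf { inf supp(ρ_u) : u ∈ A, u ≠ 0 }, where ρ_u denotes the spectral measure of u with respect to L. -/
open MeasureTheory Filter Topology
open scoped InnerProductSpace ENNReal

noncomputable section

/-- The infimum of the topological support of a Borel measure on `ℝ`, following the paper's
definition: `supp μ = {E : ∀ δ > 0, μ(E - δ, E + δ) > 0}`. -/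
def suppInf (μ : Measure ℝ) : ℝ :=
  sInf {E : ℝ | ∀ δ > 0, 0 < μ (Set.Ioo (E - δ) (E + δ))}

/-- `T` is the heat semigroup `(e^{-tL})_{t ≥ 0}` of a selfadjoint operator `L` in `H` that is
bounded below, where `ρ f` is the spectral measure of `f` with respect to `L` (the finite Borel
measure supported in `[E0, ∞)` with `⟪f, e^{-tL} f⟫ = ∫ e^{-ts} dρ_f(s)` for all `t ≥ 0`),
and `E0` is the infimum of the spectrum of `L` (equivalently, `‖e^{-tL}‖ = e^{-t·E0}`). -/
structure IsHeatSemigroupOf {H : Type*} [NormedAddCommGroup H] [InnerProductSpace ℝ H]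
    [CompleteSpace H] (T : ℝ → H →L[ℝ] H) (ρ : H → Measure ℝ) (E0 : ℝ) : Prop where
  symm : ∀ t : ℝ, 0 ≤ t → ∀ f g : H, ⟪T t f, g⟫_ℝ = ⟪f, T t g⟫_ℝ
  map_zero : T 0 = 1
  semigroup : ∀ s t : ℝ, 0 ≤ s → 0 ≤ t → T (s + t) = T s ∘L T t
  finite : ∀ f : H, ρ f Set.univ ≠ ⊤
  support_bddBelow : ∀ f : H, ρ f (Set.Iio E0) = 0
  inner_eq : ∀ (f : H) (t : ℝ), 0 ≤ t → ⟪f, T t f⟫_ℝ = ∫ s, Real.exp (-(t * s)) ∂(ρ f)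
  norm_eq : ∀ t : ℝ, 0 ≤ t → ‖T t‖ = Real.exp (-(t * E0))

/-- The "support set" whose infimum is `suppInf`. -/
def suppSet (μ : Measure ℝ) : Set ℝ :=
  {E : ℝ | ∀ δ > 0, 0 < μ (Set.Ioo (E - δ) (E + δ))}

lemma suppInf_eq_sInf_suppSet (μ : Measure ℝ) : suppInf μ = sInf (suppSet μ) := rfl

lemma suppSet_nonempty {μ : Measure ℝ} (hμ : μ ≠ 0) : (suppSet μ).Nonempty := by
  by_contra h
  rw [Set.not_nonempty_iff_eq_empty] at h
  have huniv : μ Set.univ = 0 := by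
    apply measure_null_of_locally_null
    intro x _
    have hx : x ∉ suppSet μ := by rw [h]; exact Set.notMem_empty x
    simp only [suppSet, Set.mem_setOf_eq, not_forall] at hx
    obtain ⟨δ, hδ, hzero⟩ := hx
    refine ⟨Set.Ioo (x - δ) (x + δ), ?_, ?_⟩
    · exact mem_nhdsWithin_of_mem_nhds (Ioo_mem_nhds (by linarith) (by linarith))
    · exact nonpos_iff_eq_zero.1 (not_lt.1 hzero)
  exact hμ (by ext t ht; exact measure_mono_null (Set.subset_univ t) huniv)

lemma lowerBound_suppSet {μ : Measure ℝ} {c : ℝ} (hc : μ (Set.Iio c) = 0) :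
    c ∈ lowerBounds (suppSet μ) := by
  intro E hE
  by_contra h
  push_neg at h
  have h2 := hE (c - E) (by linarith)
  have : μ (Set.Ioo (E - (c - E)) (E + (c - E))) = 0 := by
    apply measure_mono_null _ hc
    intro s hs
    simp only [Set.mem_Ioo] at hs
    simp only [Set.mem_Iio]
    linarith [hs.2]
  rw [this] at h2
  exact lt_irrefl 0 h2

lemma measure_Iio_null_of_le_sInf {μ : Measure ℝ} (bdd : BddBelow (suppSet μ)) {c : ℝ}
    (h : c ≤ sInf (suppSet μ)) : μ (Set.Iio c) = 0 := by
  apply measure_null_of_locally_null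
  intro x hx
  have hxc : x < c := hx
  have hxS : x ∉ suppSet μ := by
    intro hmem
    have := csInf_le bdd hmem
    linarith
  simp only [suppSet, Set.mem_setOf_eq, not_forall] at hxS
  obtain ⟨δ, hδ, hzero⟩ := hxS
  exact ⟨Set.Ioo (x - δ) (x + δ),
    mem_nhdsWithin_of_mem_nhds (Ioo_mem_nhds (by linarith) (by linarith)),
    nonpos_iff_eq_zero.1 (not_lt.1 hzero)⟩

lemma integrable_exp_of_Iio_null {μ : Measure ℝ} [IsFiniteMeasure μ] {c : ℝ} (t : ℝ)
    (ht : 0 ≤ t) (h : μ (Set.Iio c) = 0) :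
    Integrable (fun s => Real.exp (-(t * s))) μ := by
  have hae : ∀ᵐ s ∂μ, c ≤ s := by
    rw [ae_iff]
    convert h using 2
    ext s; simp [Set.mem_Iio]
  refine Integrable.mono' (integrable_const (Real.exp (-(t * c))))
    (Continuous.aestronglyMeasurable (by continuity)) ?_
  filter_upwards [hae] with s hs
  rw [Real.norm_eq_abs, abs_of_pos (Real.exp_pos _), Real.exp_le_exp]
  nlinarith

lemma integral_exp_le_of_Iio_null {μ : Measure ℝ} [IsFiniteMeasure μ] {c : ℝ} (t : ℝ)
    (ht : 0 ≤ t) (h : μ (Set.Iio c) = 0) :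
    ∫ s, Real.exp (-(t * s)) ∂μ ≤ Real.exp (-(t * c)) * (μ Set.univ).toReal := by
  have hae : ∀ᵐ s ∂μ, c ≤ s := by
    rw [ae_iff]; convert h using 2; ext s; simp [Set.mem_Iio]
  have := integral_mono_ae (integrable_exp_of_Iio_null t ht h)
    (integrable_const (Real.exp (-(t * c)))) ?_
  · rw [integral_const, smul_eq_mul] at this
    exact this.trans_eq (mul_comm _ _)
  · filter_upwards [hae] with s hs
    rw [Real.exp_le_exp]; nlinarith

/-- If the Laplace transform decays like `C e^{-tc}`, the mass below `c` is zero. -/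
lemma measure_Iio_null_of_decay (μ : Measure ℝ) [IsFiniteMeasure μ] (E0 c C : ℝ)
    (h0 : μ (Set.Iio E0) = 0)
    (hb : ∀ t : ℝ, 0 ≤ t → ∫ s, Real.exp (-(t * s)) ∂μ ≤ C * Real.exp (-(t * c))) :
    μ (Set.Iio c) = 0 := by
  have key : ∀ E : ℝ, E < c → μ (Set.Icc E0 E) = 0 := by
    intro E hE
    have hr : ∀ t : ℝ, 0 ≤ t →
        (μ (Set.Icc E0 E)).toReal * Real.exp (-(t * E)) ≤ C * Real.exp (-(t * c)) := by
      intro t ht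
      have hint := integrable_exp_of_Iio_null (c := E0) t ht h0
      have h1 : ∫ s in Set.Icc E0 E, Real.exp (-(t * E)) ∂μ ≤
          ∫ s in Set.Icc E0 E, Real.exp (-(t * s)) ∂μ := by
        apply setIntegral_mono_on (integrable_const _).integrableOn hint.integrableOn
          measurableSet_Icc
        intro s hs
        rw [Real.exp_le_exp]
        nlinarith [hs.2]
      have h2 : ∫ s in Set.Icc E0 E, Real.exp (-(t * s)) ∂μ ≤ ∫ s, Real.exp (-(t * s)) ∂μ := by
        apply setIntegral_le_integral hint
        filter_upwards with s using (Real.exp_pos _).le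
      rw [setIntegral_const, smul_eq_mul] at h1
      calc (μ (Set.Icc E0 E)).toReal * Real.exp (-(t * E)) ≤ ∫ s, Real.exp (-(t * s)) ∂μ :=
            le_trans h1 h2
        _ ≤ C * Real.exp (-(t * c)) := hb t ht
    have hlim : Tendsto (fun n : ℕ => C * Real.exp (-((n : ℝ) * (c - E)))) atTop (𝓝 0) := by
      have h1 : Tendsto (fun x : ℝ => -(x * (c - E))) atTop atBot := by
        apply Filter.tendsto_neg_atBot_iff.2
        exact Tendsto.atTop_mul_const (by linarith) tendsto_id
      have h2 : Tendsto (fun n : ℕ => Real.exp (-((n : ℝ) * (c - E)))) atTop (𝓝 0) :=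
        (Real.tendsto_exp_atBot.comp h1).comp tendsto_natCast_atTop_atTop
      simpa using h2.const_mul C
    have hle : (μ (Set.Icc E0 E)).toReal ≤ 0 := by
      apply ge_of_tendsto' hlim
      intro n
      have hrn := hr n (Nat.cast_nonneg n)
      have hexp : Real.exp (-((n : ℝ) * E)) > 0 := Real.exp_pos _
      have hdiv : (μ (Set.Icc E0 E)).toReal ≤
          C * Real.exp (-((n : ℝ) * c)) / Real.exp (-((n : ℝ) * E)) := by
        rw [le_div_iff₀ hexp]; linarith
      calc (μ (Set.Icc E0 E)).toReal
          ≤ C * Real.exp (-((n : ℝ) * c)) / Real.exp (-((n : ℝ) * E)) := hdiv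
        _ = C * Real.exp (-((n : ℝ) * (c - E))) := by
            rw [mul_div_assoc, ← Real.exp_sub]; ring_nf
    have : (μ (Set.Icc E0 E)).toReal = 0 := le_antisymm hle ENNReal.toReal_nonneg
    exact (ENNReal.toReal_eq_zero_iff _).1 this |>.resolve_right (measure_ne_top μ _)
  have hcover : Set.Iio c ⊆ Set.Iio E0 ∪ ⋃ n : ℕ, Set.Icc E0 (c - 1 / (n + 1)) := by
    intro x hx
    by_cases hxE : x < E0
    · exact Or.inl hxE
    · push_neg at hxE
      obtain ⟨n, hn⟩ := exists_nat_one_div_lt (show (0:ℝ) < c - x by simpa [Set.mem_Iio] using hx)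
      exact Or.inr (Set.mem_iUnion.2 ⟨n, ⟨hxE, by linarith⟩⟩)
  refine measure_mono_null hcover (measure_union_null h0 (measure_iUnion_null fun n => ?_))
  have hpos : (0:ℝ) < 1 / (n + 1 : ℝ) := by positivity
  exact key _ (by linarith)

/-- Let `L` be a selfadjoint operator in a Hilbert space `H` that is bounded
below, and let `A ⊆ H` be a total subset (i.e., the linear span of `A` is dense in `H`). Then
the infimum of the spectrum of `L` satisfies
`E0(L) = inf { inf supp(ρ_u) : u ∈ A, u ≠ 0 }`. -/
theorem statement3 {H : Type*} [NormedAddCommGroup H] [InnerProductSpace ℝ H] [CompleteSpace H]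
    (T : ℝ → H →L[ℝ] H) (ρ : H → Measure ℝ) (E0 : ℝ)
    (hT : IsHeatSemigroupOf T ρ E0)
    (A : Set H)
    (hA : Dense (Submodule.span ℝ A : Set H)) :
    E0 = sInf ((fun u => suppInf (ρ u)) '' {u ∈ A | u ≠ 0}) := by
  have hfin : ∀ f : H, IsFiniteMeasure (ρ f) := fun f => ⟨lt_top_iff_ne_top.2 (hT.finite f)⟩
  set I := sInf ((fun u => suppInf (ρ u)) '' {u ∈ A | u ≠ 0}) with hIdef
  -- `(ρ f univ).toReal = ‖f‖ ^ 2`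
  have normsq : ∀ f : H, (ρ f Set.univ).toReal = ‖f‖ ^ 2 := by
    intro f
    have h := hT.inner_eq f 0 le_rfl
    rw [hT.map_zero] at h
    simp only [ContinuousLinearMap.one_apply] at h
    rw [real_inner_self_eq_norm_sq] at h
    simp only [zero_mul, neg_zero, Real.exp_zero] at h
    rw [integral_const, smul_eq_mul, mul_one] at h
    exact h.symm
  have hrho_ne : ∀ u : H, u ≠ 0 → ρ u ≠ 0 := by
    intro u hu h0
    apply hu
    have hn := normsq u
    rw [h0] at hn
    simp only [Measure.coe_zero, Pi.zero_apply, ENNReal.toReal_zero] at hn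
    have : ‖u‖ = 0 := by nlinarith [norm_nonneg u]
    exact norm_eq_zero.1 this
  -- every element of the set is `≥ E0`
  have hEl : ∀ b ∈ (fun u => suppInf (ρ u)) '' {u ∈ A | u ≠ 0}, E0 ≤ b := by
    rintro b ⟨u, ⟨huA, hu0⟩, rfl⟩
    show E0 ≤ sInf (suppSet (ρ u))
    exact le_csInf (suppSet_nonempty (hrho_ne u hu0))
      (fun E hE => lowerBound_suppSet (hT.support_bddBelow u) hE)
  -- the set is nonempty
  have hne : ((fun u => suppInf (ρ u)) '' {u ∈ A | u ≠ 0}).Nonempty := by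
    rcases Set.eq_empty_or_nonempty {u ∈ A | u ≠ 0} with h | h
    · exfalso
      have hA0 : A ⊆ {0} := by
        intro a ha
        by_contra ha0
        exact (Set.eq_empty_iff_forall_notMem.1 h a) ⟨ha, ha0⟩
      have hspan : (Submodule.span ℝ A : Set H) ⊆ {0} := by
        have hle : Submodule.span ℝ A ≤ ⊥ := Submodule.span_le.2 (by simpa using hA0)
        intro x hx; simpa using hle hx
      have hall : ∀ x : H, x = 0 := by
        intro x
        have hx : x ∈ closure (Submodule.span ℝ A : Set H) := hA x
        have := closure_minimal hspan isClosed_singleton hx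
        simpa using this
      have h1 := hT.norm_eq 0 le_rfl
      have h2 : T 0 = 0 := by ext x; exact hall _
      rw [h2] at h1
      norm_num at h1
    · exact h.image _
  have bddS : BddBelow ((fun u => suppInf (ρ u)) '' {u ∈ A | u ≠ 0}) := ⟨E0, hEl⟩
  -- the key identity `‖T t f‖² = ⟪f, T (t+t) f⟫`
  have hTnorm : ∀ (t : ℝ), 0 ≤ t → ∀ f : H, ‖T t f‖ ^ 2 = ⟪f, T (t + t) f⟫_ℝ := by
    intro t ht f
    rw [hT.semigroup t t ht ht, ContinuousLinearMap.comp_apply,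
      ← hT.symm t ht f (T t f)]
    exact (real_inner_self_eq_norm_sq _).symm
  -- main direction: `I ≤ E0`
  have hIle : I ≤ E0 := by
    by_contra hc
    push_neg at hc
    have claimA : ∀ u ∈ A, ρ u (Set.Iio I) = 0 := by
      intro u huA
      by_cases hu0 : u = 0
      · subst hu0
        have hn : (ρ 0 Set.univ).toReal = 0 := by rw [normsq]; simp
        have h0 : ρ 0 Set.univ = 0 :=
          ((ENNReal.toReal_eq_zero_iff _).1 hn).resolve_right (hT.finite 0)
        exact measure_mono_null (Set.subset_univ _) h0
      · have hmem : suppInf (ρ u) ∈ (fun u => suppInf (ρ u)) '' {u ∈ A | u ≠ 0} :=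
          Set.mem_image_of_mem _ ⟨huA, hu0⟩
        have hle : I ≤ sInf (suppSet (ρ u)) := by
          rw [← suppInf_eq_sInf_suppSet]; exact csInf_le bddS hmem
        exact measure_Iio_null_of_le_sInf
          ⟨E0, lowerBound_suppSet (hT.support_bddBelow u)⟩ hle
    have claimB : ∀ u ∈ A, ∀ t : ℝ, 0 ≤ t → ‖T t u‖ ≤ Real.exp (-(t * I)) * ‖u‖ := by
      intro u huA t ht
      haveI := hfin u
      have h1 : ‖T t u‖ ^ 2 = ∫ s, Real.exp (-((t + t) * s)) ∂(ρ u) := by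
        rw [hTnorm t ht u, hT.inner_eq u (t + t) (by linarith)]
      have h2 : ∫ s, Real.exp (-((t + t) * s)) ∂(ρ u) ≤
          Real.exp (-((t + t) * I)) * (ρ u Set.univ).toReal :=
        integral_exp_le_of_Iio_null (t + t) (by linarith) (claimA u huA)
      have h3 : ‖T t u‖ ^ 2 ≤ (Real.exp (-(t * I)) * ‖u‖) ^ 2 := by
        rw [h1]
        calc ∫ s, Real.exp (-((t + t) * s)) ∂(ρ u)
            ≤ Real.exp (-((t + t) * I)) * (ρ u Set.univ).toReal := h2
          _ = (Real.exp (-(t * I)) * ‖u‖) ^ 2 := by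
              rw [normsq, mul_pow, sq (Real.exp (-(t * I))), ← Real.exp_add]
              congr 2
              ring
      nlinarith [norm_nonneg (T t u),
        mul_nonneg (Real.exp_pos (-(t * I))).le (norm_nonneg u)]
    have claimC : ∀ f ∈ Submodule.span ℝ A, ∃ C : ℝ, 0 ≤ C ∧ ∀ t : ℝ, 0 ≤ t →
        ‖T t f‖ ≤ C * Real.exp (-(t * I)) := by
      intro f hf
      induction hf using Submodule.span_induction with
      | mem u hu => exact ⟨‖u‖, norm_nonneg u, fun t ht => by
          rw [mul_comm]; exact claimB u hu t ht⟩
      | zero => exact ⟨0, le_rfl, fun t ht => by simp⟩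
      | add x y hx hy ihx ihy =>
          obtain ⟨C1, hC1, h1⟩ := ihx
          obtain ⟨C2, hC2, h2⟩ := ihy
          refine ⟨C1 + C2, by linarith, fun t ht => ?_⟩
          rw [map_add]
          calc ‖T t x + T t y‖ ≤ ‖T t x‖ + ‖T t y‖ := norm_add_le _ _
            _ ≤ C1 * Real.exp (-(t * I)) + C2 * Real.exp (-(t * I)) :=
                add_le_add (h1 t ht) (h2 t ht)
            _ = (C1 + C2) * Real.exp (-(t * I)) := by ring
      | smul a x hx ihx =>
          obtain ⟨C, hC, h1⟩ := ihx
          refine ⟨|a| * C, by positivity, fun t ht => ?_⟩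
          rw [_root_.map_smul, norm_smul, Real.norm_eq_abs, mul_assoc]
          exact mul_le_mul_of_nonneg_left (h1 t ht) (abs_nonneg a)
    have claimD : ∀ f ∈ Submodule.span ℝ A, ρ f (Set.Iio I) = 0 := by
      intro f hf
      obtain ⟨C, hC, hCb⟩ := claimC f hf
      haveI := hfin f
      apply measure_Iio_null_of_decay (ρ f) E0 I (C ^ 2) (hT.support_bddBelow f)
      intro t ht
      have h1 : ∫ s, Real.exp (-(t * s)) ∂(ρ f) = ‖T (t / 2) f‖ ^ 2 := by
        rw [hTnorm (t / 2) (by linarith) f, show t / 2 + t / 2 = t by ring,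
          hT.inner_eq f t ht]
      rw [h1]
      have hb := hCb (t / 2) (by linarith)
      have hsq : ‖T (t / 2) f‖ ^ 2 ≤ (C * Real.exp (-(t / 2 * I))) ^ 2 := by
        nlinarith [norm_nonneg (T (t / 2) f), Real.exp_pos (-(t / 2 * I))]
      calc ‖T (t / 2) f‖ ^ 2 ≤ (C * Real.exp (-(t / 2 * I))) ^ 2 := hsq
        _ = C ^ 2 * Real.exp (-(t * I)) := by
            rw [mul_pow, sq (Real.exp (-(t / 2 * I))), ← Real.exp_add]
            congr 2
            ring
    have claimE : ∀ t : ℝ, 0 ≤ t → ∀ g : H,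
        ⟪g, T t g⟫_ℝ ≤ Real.exp (-(t * I)) * ‖g‖ ^ 2 := by
      intro t ht
      have hclosed : IsClosed {g : H | ⟪g, T t g⟫_ℝ ≤ Real.exp (-(t * I)) * ‖g‖ ^ 2} := by
        apply isClosed_le
        · exact Continuous.inner continuous_id (T t).continuous
        · exact continuous_const.mul (continuous_norm.pow 2)
      have hsub : (Submodule.span ℝ A : Set H) ⊆
          {g : H | ⟪g, T t g⟫_ℝ ≤ Real.exp (-(t * I)) * ‖g‖ ^ 2} := by
        intro f hf
        haveI := hfin f
        rw [Set.mem_setOf_eq, hT.inner_eq f t ht, ← normsq f]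
        exact integral_exp_le_of_Iio_null t ht (claimD f hf)
      intro g
      exact closure_minimal hsub hclosed (hA g)
    have hnormle : ‖T 1‖ ≤ Real.exp (-I) := by
      apply ContinuousLinearMap.opNorm_le_bound _ (Real.exp_pos _).le
      intro g
      have h1 : ‖T 1 g‖ ^ 2 = ⟪g, T (1 + 1) g⟫_ℝ := hTnorm 1 zero_le_one g
      have h2 := claimE 2 (by norm_num) g
      have h3 : ‖T 1 g‖ ^ 2 ≤ (Real.exp (-I) * ‖g‖) ^ 2 := by
        rw [h1, show (1:ℝ) + 1 = 2 by norm_num]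
        calc ⟪g, T 2 g⟫_ℝ ≤ Real.exp (-(2 * I)) * ‖g‖ ^ 2 := h2
          _ = (Real.exp (-I) * ‖g‖) ^ 2 := by
              rw [mul_pow, sq (Real.exp (-I)), ← Real.exp_add]
              congr 2
              ring
      nlinarith [norm_nonneg (T 1 g), mul_nonneg (Real.exp_pos (-I)).le (norm_nonneg g)]
    have heq := hT.norm_eq 1 zero_le_one
    rw [heq, one_mul, Real.exp_le_exp] at hnormle
    linarith
  exact le_antisymm (le_csInf hne hEl) hIle
end
end

section
/- Let L be a selfadjoint operator in L²(X, m), bounded below, with E0 the infimum of the spectrum of L, and assume that the semigroup (e^{-tL})_{t≥0} is positivity improving. Then lim_{t→∞} (log⟨f, e^{-tL} g⟩)/t = −E0 for all positive f and g in L²(X, m). -/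
open MeasureTheory Filter Topology
open scoped InnerProductSpace ENNReal

noncomputable section

namespace Statement5Aux

variable {X : Type*} [MeasurableSpace X] {m : Measure X}
variable {T : ℝ → Lp ℝ 2 m →L[ℝ] Lp ℝ 2 m} {ρ : Lp ℝ 2 m → Measure ℝ} {E0 : ℝ}

theorem inner_nonneg_of_nonneg (u v : Lp ℝ 2 m) (hu : 0 ≤ u) (hv : 0 ≤ v) :
    (0:ℝ) ≤ ⟪u, v⟫_ℝ := by
  rw [MeasureTheory.L2.inner_def]
  refine integral_nonneg_of_ae ?_
  filter_upwards [(Lp.coeFn_nonneg u).2 hu, (Lp.coeFn_nonneg v).2 hv] with x h1 h2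
  simp only [RCLike.inner_apply, starRingEnd_apply, star_trivial, Pi.zero_apply] at *
  exact mul_nonneg h2 h1

theorem T_nonneg (hT : IsHeatSemigroupOf T ρ E0)
    (hpi : ∀ t : ℝ, 0 < t → ∀ f : Lp ℝ 2 m, 0 ≤ f → f ≠ 0 → ∀ᵐ x ∂m, 0 < (T t f) x)
    {t : ℝ} (ht : 0 ≤ t) {u : Lp ℝ 2 m} (hu : 0 ≤ u) : 0 ≤ T t u := by
  rcases eq_or_lt_of_le ht with h | h
  · rw [← h, hT.map_zero]; simpa using hu
  rcases eq_or_ne u 0 with rfl | hne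
  · simp
  refine (Lp.coeFn_nonneg _).1 ?_
  filter_upwards [hpi t h u hu hne] with x hx
  simpa using hx.le

theorem Phi_mono (hT : IsHeatSemigroupOf T ρ E0)
    (hpi : ∀ t : ℝ, 0 < t → ∀ f : Lp ℝ 2 m, 0 ≤ f → f ≠ 0 → ∀ᵐ x ∂m, 0 < (T t f) x)
    {t : ℝ} (ht : 0 ≤ t) {a b : Lp ℝ 2 m} (ha : 0 ≤ a) (hab : a ≤ b) :
    ⟪a, T t a⟫_ℝ ≤ ⟪b, T t b⟫_ℝ := by
  have hb : 0 ≤ b := ha.trans hab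
  have h1 : ⟪a, T t a⟫_ℝ ≤ ⟪a, T t b⟫_ℝ := by
    have h0 := inner_nonneg_of_nonneg a (T t (b - a)) ha
      (T_nonneg hT hpi ht (sub_nonneg.2 hab))
    rw [map_sub, inner_sub_right] at h0; linarith
  have h2 : ⟪a, T t b⟫_ℝ ≤ ⟪b, T t b⟫_ℝ := by
    have h0 := inner_nonneg_of_nonneg (b - a) (T t b) (sub_nonneg.2 hab)
      (T_nonneg hT hpi ht hb)
    rw [inner_sub_left] at h0; linarith
  linarith

theorem Phi_abs (hT : IsHeatSemigroupOf T ρ E0)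
    (hpi : ∀ t : ℝ, 0 < t → ∀ f : Lp ℝ 2 m, 0 ≤ f → f ≠ 0 → ∀ᵐ x ∂m, 0 < (T t f) x)
    {t : ℝ} (ht : 0 ≤ t) (u : Lp ℝ 2 m) :
    ⟪u, T t u⟫_ℝ ≤ ⟪|u|, T t |u|⟫_ℝ := by
  have h1 : 0 ≤ |u| - u := sub_nonneg.2 (le_abs_self (α := Lp ℝ 2 m) u)
  have h2 : 0 ≤ |u| + u := by
    have h : -u ≤ |u| := le_sup_right
    have h' := add_le_add_left h u
    simpa [add_comm] using h'
  have h0 := inner_nonneg_of_nonneg _ _ h1 (T_nonneg hT hpi ht h2)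
  have hc : ⟪u, T t |u|⟫_ℝ = ⟪|u|, T t u⟫_ℝ := by
    rw [← hT.symm t ht u |u|, real_inner_comm]
  rw [map_add, inner_sub_left, inner_add_right, inner_add_right, hc] at h0
  linarith


theorem rho_ae_ge (hT : IsHeatSemigroupOf T ρ E0) (u : Lp ℝ 2 m) :
    ∀ᵐ s ∂(ρ u), E0 ≤ s := by
  rw [ae_iff]
  convert hT.support_bddBelow u using 2
  ext s
  simp [not_le, Set.mem_Iio]

theorem exp_integrable (hT : IsHeatSemigroupOf T ρ E0) (u : Lp ℝ 2 m) {t : ℝ} (ht : 0 ≤ t) :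
    Integrable (fun s : ℝ => Real.exp (-(t * s))) (ρ u) := by
  haveI : IsFiniteMeasure (ρ u) := ⟨(hT.finite u).lt_top⟩
  refine Integrable.mono' (integrable_const (Real.exp (-(t * E0)))) ?_ ?_
  · exact (Real.continuous_exp.comp (by continuity)).aestronglyMeasurable
  · filter_upwards [rho_ae_ge hT u] with s hs
    rw [Real.norm_eq_abs, abs_of_pos (Real.exp_pos _)]
    exact Real.exp_le_exp.2 (by nlinarith)

theorem mass_eq (hT : IsHeatSemigroupOf T ρ E0) (u : Lp ℝ 2 m) :
    ((ρ u) Set.univ).toReal = ‖u‖ ^ 2 := by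
  haveI : IsFiniteMeasure (ρ u) := ⟨(hT.finite u).lt_top⟩
  have h := hT.inner_eq u 0 le_rfl
  simp only [zero_mul, neg_zero, Real.exp_zero] at h
  rw [hT.map_zero, ContinuousLinearMap.one_apply, real_inner_self_eq_norm_sq,
    integral_const, smul_eq_mul, mul_one] at h
  exact h.symm

theorem Phi_lower (hT : IsHeatSemigroupOf T ρ E0) {u : Lp ℝ 2 m} {E1 : ℝ}
    {t : ℝ} (ht : 0 ≤ t) :
    Real.exp (-(t * E1)) * ((ρ u) (Set.Ico E0 E1)).toReal ≤ ⟪u, T t u⟫_ℝ := by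
  haveI : IsFiniteMeasure (ρ u) := ⟨(hT.finite u).lt_top⟩
  rw [hT.inner_eq u t ht]
  have h1 : ∫ s in Set.Ico E0 E1, Real.exp (-(t * s)) ∂(ρ u)
      ≤ ∫ s, Real.exp (-(t * s)) ∂(ρ u) :=
    setIntegral_le_integral (exp_integrable hT u ht)
      (Filter.Eventually.of_forall fun s => (Real.exp_pos _).le)
  have h2 : Real.exp (-(t * E1)) * ((ρ u) (Set.Ico E0 E1)).toReal
      ≤ ∫ s in Set.Ico E0 E1, Real.exp (-(t * s)) ∂(ρ u) := by
    refine setIntegral_ge_of_const_le_real measurableSet_Ico (measure_ne_top _ _) ?_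
      ((exp_integrable hT u ht).integrableOn)
    intro x hx
    exact Real.exp_le_exp.2 (by nlinarith [hx.2, ht])
  exact h2.trans h1

theorem Phi_upper (hT : IsHeatSemigroupOf T ρ E0) {u : Lp ℝ 2 m} {E1 : ℝ}
    (hu : (ρ u) (Set.Iio E1) = 0) {t : ℝ} (ht : 0 ≤ t) :
    ⟪u, T t u⟫_ℝ ≤ Real.exp (-(t * E1)) * ‖u‖ ^ 2 := by
  haveI : IsFiniteMeasure (ρ u) := ⟨(hT.finite u).lt_top⟩
  rw [hT.inner_eq u t ht]
  have hae : ∀ᵐ s ∂(ρ u), E1 ≤ s := by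
    rw [ae_iff]
    convert hu using 2
    ext s
    simp [not_le, Set.mem_Iio]
  calc ∫ s, Real.exp (-(t*s)) ∂(ρ u) ≤ ∫ _, Real.exp (-(t*E1)) ∂(ρ u) := by
        refine integral_mono_ae (exp_integrable hT u ht) (integrable_const _) ?_
        filter_upwards [hae] with s hs
        exact Real.exp_le_exp.2 (by nlinarith)
    _ = Real.exp (-(t*E1)) * ‖u‖^2 := by
        rw [integral_const, smul_eq_mul, measureReal_def, mass_eq hT u, mul_comm]

theorem norm_T_sq (hT : IsHeatSemigroupOf T ρ E0) {t : ℝ} (ht : 0 ≤ t) (u : Lp ℝ 2 m) :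
    ‖T t u‖ ^ 2 = ⟪u, T (t + t) u⟫_ℝ := by
  rw [hT.semigroup t t ht ht, ContinuousLinearMap.comp_apply, ← hT.symm t ht,
    real_inner_self_eq_norm_sq]

theorem lemmaA (hT : IsHeatSemigroupOf T ρ E0)
    (hpi : ∀ t : ℝ, 0 < t → ∀ f : Lp ℝ 2 m, 0 ≤ f → f ≠ 0 → ∀ᵐ x ∂m, 0 < (T t f) x)
    {W : Lp ℝ 2 m} (hWpos : ∀ᵐ x ∂m, 0 < W x) {ε : ℝ} (hε : 0 < ε) :
    ∃ c : ℝ, 0 < c ∧ ∀ t : ℝ, 0 ≤ t →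
      c * Real.exp (-(t * (E0 + ε))) ≤ ⟪W, T t W⟫_ℝ := by
  by_cases hcase : ∃ (u : Lp ℝ 2 m) (C : ℝ), 0 < C ∧ |u| ≤ C • W ∧
      ρ u (Set.Iio (E0 + ε)) ≠ 0
  · obtain ⟨u, C, hC, hle, hne⟩ := hcase
    haveI : IsFiniteMeasure (ρ u) := ⟨(hT.finite u).lt_top⟩
    set c₀ := ((ρ u) (Set.Ico E0 (E0 + ε))).toReal with hc₀def
    have hIco_ne : (ρ u) (Set.Ico E0 (E0 + ε)) ≠ 0 := by
      intro h0
      have hsub := measure_union_le (μ := ρ u) (Set.Iio E0) (Set.Ico E0 (E0 + ε))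
      rw [Set.Iio_union_Ico_eq_Iio (le_of_lt (lt_add_of_pos_right E0 hε))] at hsub
      exact hne (le_antisymm
        (by simpa [hT.support_bddBelow u, h0] using hsub) (by simp))
    have hc₀ : 0 < c₀ := ENNReal.toReal_pos hIco_ne (measure_ne_top _ _)
    refine ⟨c₀ / C ^ 2, div_pos hc₀ (by positivity), fun t ht => ?_⟩
    have h1 : Real.exp (-(t * (E0 + ε))) * c₀ ≤ ⟪u, T t u⟫_ℝ := Phi_lower hT ht
    have h2 : ⟪u, T t u⟫_ℝ ≤ ⟪|u|, T t |u|⟫_ℝ := Phi_abs hT hpi ht u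
    have h3 : ⟪|u|, T t |u|⟫_ℝ ≤ ⟪C • W, T t (C • W)⟫_ℝ :=
      Phi_mono hT hpi ht (abs_nonneg (α := Lp ℝ 2 m) u) hle
    have h4 : ⟪C • W, T t (C • W)⟫_ℝ = C ^ 2 * ⟪W, T t W⟫_ℝ := by
      rw [_root_.map_smul, real_inner_smul_left, real_inner_smul_right]; ring
    have h5 : Real.exp (-(t * (E0 + ε))) * c₀ ≤ C ^ 2 * ⟪W, T t W⟫_ℝ := by
      rw [← h4]; exact h1.trans (h2.trans h3)
    rw [div_mul_eq_mul_div, div_le_iff₀ (by positivity : (0:ℝ) < C ^ 2)]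
    calc c₀ * Real.exp (-(t * (E0 + ε))) = Real.exp (-(t * (E0 + ε))) * c₀ := mul_comm _ _
      _ ≤ C ^ 2 * ⟪W, T t W⟫_ℝ := h5
      _ = ⟪W, T t W⟫_ℝ * C ^ 2 := mul_comm _ _
  · exfalso
    push_neg at hcase
    have hW0 : 0 ≤ W := by
      refine (Lp.coeFn_nonneg W).1 ?_
      filter_upwards [hWpos] with x hx using hx.le
    set θ := Real.exp (-(E0 + ε)) with hθdef
    have key : ∀ x : Lp ℝ 2 m, ‖T 1 x‖ ≤ θ * ‖x‖ := by
      intro x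
      set y : ℕ → Lp ℝ 2 m :=
        fun n => (x ⊓ (((n : ℝ) + 1) • W)) ⊔ (-(((n : ℝ) + 1) • W)) with hydef
      have hyx : ∀ n : ℕ, ∀ᵐ ω ∂m,
          (y n) ω = max (min (x ω) (((n : ℝ) + 1) * W ω)) (-(((n : ℝ) + 1) * W ω)) := by
        intro n
        filter_upwards [Lp.coeFn_sup (x ⊓ (((n : ℝ) + 1) • W)) (-(((n : ℝ) + 1) • W)),
          Lp.coeFn_inf x (((n : ℝ) + 1) • W), Lp.coeFn_neg (((n : ℝ) + 1) • W),
          Lp.coeFn_smul ((n : ℝ) + 1) W] with ω h1 h2 h3 h4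
        rw [hydef]
        simp only []
        rw [h1, Pi.sup_apply, h2, Pi.inf_apply, h3, Pi.neg_apply, h4, Pi.smul_apply,
          smul_eq_mul]
      have hy_ptwise : ∀ n : ℕ, ∀ᵐ ω ∂m, |(y n) ω| ≤ |x ω| := by
        intro n
        filter_upwards [hyx n, hWpos] with ω h1 hW
        have ha : 0 ≤ ((n : ℝ) + 1) * W ω := mul_nonneg (by positivity) hW.le
        rw [h1, abs_le]
        constructor
        · exact le_trans (le_min (neg_abs_le _)
            ((neg_nonpos.mpr (abs_nonneg _)).trans ha)) (le_max_left _ _)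
        · exact max_le ((min_le_left _ _).trans (le_abs_self _))
            ((neg_nonpos.mpr ha).trans (abs_nonneg _))
      have h_abs : ∀ n : ℕ, |y n| ≤ ((n : ℝ) + 1) • W := by
        intro n
        rw [← Lp.coeFn_le]
        filter_upwards [hyx n, Lp.coeFn_abs (y n), Lp.coeFn_smul ((n : ℝ) + 1) W, hWpos]
          with ω h1 h2 h3 hW
        have ha : 0 ≤ ((n : ℝ) + 1) * W ω := mul_nonneg (by positivity) hW.le
        rw [h2, h3, Pi.smul_apply, smul_eq_mul, h1, abs_le]
        refine ⟨le_max_right _ _, max_le (min_le_right _ _) (neg_le_self ha)⟩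
      have h_rho : ∀ n : ℕ, ρ (y n) (Set.Iio (E0 + ε)) = 0 := fun n =>
        hcase (y n) ((n : ℝ) + 1) (by positivity) (h_abs n)
      have h_norm_y : ∀ n : ℕ, ‖y n‖ ≤ ‖x‖ := by
        intro n
        refine norm_le_norm_of_abs_le_abs ?_
        rw [← Lp.coeFn_le]
        filter_upwards [hy_ptwise n, Lp.coeFn_abs (y n), Lp.coeFn_abs x] with ω h1 h2 h3
        rw [h2, h3]
        exact h1
      have hTy : ∀ n : ℕ, ‖T 1 (y n)‖ ≤ θ * ‖y n‖ := by
        intro n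
        have h2 : ‖T 1 (y n)‖ ^ 2 ≤ (θ * ‖y n‖) ^ 2 := by
          rw [norm_T_sq hT zero_le_one]
          calc ⟪y n, T (1 + 1) (y n)⟫_ℝ
              ≤ Real.exp (-((1 + 1) * (E0 + ε))) * ‖y n‖ ^ 2 :=
                Phi_upper hT (h_rho n) (by norm_num)
            _ = (θ * ‖y n‖) ^ 2 := by
                rw [hθdef, mul_pow, pow_two (Real.exp (-(E0 + ε))), ← Real.exp_add]
                congr 2
                ring
        have h3 := Real.sqrt_le_sqrt h2
        rwa [Real.sqrt_sq (norm_nonneg _), Real.sqrt_sq (by positivity)] at h3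
      -- convergence y n → x in Lp
      have hxx : Integrable (fun ω => x ω * x ω) m := by
        have h := MeasureTheory.L2.integrable_inner (𝕜 := ℝ) x x
        simpa [RCLike.inner_apply, starRingEnd_apply, star_trivial, pow_two] using h
      have hmeas : ∀ n : ℕ, AEStronglyMeasurable
          (fun ω => ((y n) ω - x ω) * ((y n) ω - x ω)) m := by
        intro n
        exact ((Lp.aestronglyMeasurable (y n)).sub (Lp.aestronglyMeasurable x)).mul
          ((Lp.aestronglyMeasurable (y n)).sub (Lp.aestronglyMeasurable x))
      have hbound : ∀ n : ℕ, ∀ᵐ ω ∂m,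
          ‖((y n) ω - x ω) * ((y n) ω - x ω)‖ ≤ 4 * (x ω * x ω) := by
        intro n
        filter_upwards [hy_ptwise n] with ω h1
        have h2 : |(y n) ω - x ω| ≤ 2 * |x ω| := by
          calc |(y n) ω - x ω| ≤ |(y n) ω| + |x ω| := abs_sub _ _
            _ ≤ 2 * |x ω| := by linarith
        calc ‖((y n) ω - x ω) * ((y n) ω - x ω)‖
            = |(y n) ω - x ω| * |(y n) ω - x ω| := by rw [Real.norm_eq_abs, abs_mul]
          _ ≤ (2 * |x ω|) * (2 * |x ω|) :=
              mul_le_mul h2 h2 (abs_nonneg _) (by positivity)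
          _ = 4 * (|x ω| * |x ω|) := by ring
          _ = 4 * (x ω * x ω) := by rw [abs_mul_abs_self]
      have hlim : ∀ᵐ ω ∂m, Tendsto (fun n : ℕ => ((y n) ω - x ω) * ((y n) ω - x ω))
          atTop (𝓝 0) := by
        have hall : ∀ᵐ ω ∂m, ∀ n : ℕ,
            (y n) ω = max (min (x ω) (((n : ℝ) + 1) * W ω)) (-(((n : ℝ) + 1) * W ω)) :=
          ae_all_iff.2 hyx
        filter_upwards [hall, hWpos] with ω hω hW
        obtain ⟨N, hN⟩ := exists_nat_ge (|x ω| / W ω)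
        have hev : ∀ n : ℕ, N ≤ n → ((y n) ω - x ω) * ((y n) ω - x ω) = 0 := by
          intro n hn
          have hWn : |x ω| ≤ ((n : ℝ) + 1) * W ω := by
            rw [div_le_iff₀ hW] at hN
            have : (N : ℝ) ≤ (n : ℝ) := Nat.cast_le.2 hn
            nlinarith [hW]
          have h1 : min (x ω) (((n : ℝ) + 1) * W ω) = x ω :=
            min_eq_left ((le_abs_self _).trans hWn)
          have h2 : max (x ω) (-(((n : ℝ) + 1) * W ω)) = x ω :=
            max_eq_left (by nlinarith [neg_abs_le (x ω)])
          rw [hω n, h1, h2, sub_self, mul_zero]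
        refine tendsto_atTop_of_eventually_const hev
      have hsq : Tendsto (fun n : ℕ => ∫ ω, ((y n) ω - x ω) * ((y n) ω - x ω) ∂m)
          atTop (𝓝 0) := by
        have h := tendsto_integral_of_dominated_convergence (fun ω => 4 * (x ω * x ω))
          hmeas (hxx.const_mul 4) hbound hlim
        simpa using h
      have hnorm_eq : ∀ n : ℕ, ‖y n - x‖ ^ 2
          = ∫ ω, ((y n) ω - x ω) * ((y n) ω - x ω) ∂m := by
        intro n
        rw [← real_inner_self_eq_norm_sq, MeasureTheory.L2.inner_def]
        refine integral_congr_ae ?_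
        filter_upwards [Lp.coeFn_sub (y n) x] with ω hω
        rw [hω, Pi.sub_apply]
        simp [RCLike.inner_apply, starRingEnd_apply, star_trivial, pow_two]
      have hsq' : Tendsto (fun n : ℕ => ‖y n - x‖ ^ 2) atTop (𝓝 0) := by
        have : (fun n : ℕ => ‖y n - x‖ ^ 2)
            = fun n : ℕ => ∫ ω, ((y n) ω - x ω) * ((y n) ω - x ω) ∂m :=
          funext hnorm_eq
        rw [this]; exact hsq
      have hconv : Tendsto (fun n : ℕ => ‖y n - x‖) atTop (𝓝 0) := by
        have h := (Real.continuous_sqrt.tendsto 0).comp hsq'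
        have h5 : ((fun s : ℝ => Real.sqrt s) ∘ fun n : ℕ => ‖y n - x‖ ^ 2)
            = fun n : ℕ => ‖y n - x‖ :=
          funext fun n => Real.sqrt_sq (norm_nonneg _)
        rw [h5, Real.sqrt_zero] at h
        exact h
      have h6 : Tendsto y atTop (𝓝 x) := by
        rw [tendsto_iff_norm_sub_tendsto_zero]
        exact hconv
      have h7 : Tendsto (fun n : ℕ => ‖T 1 (y n)‖) atTop (𝓝 ‖T 1 x‖) :=
        (((T 1).continuous.tendsto x).comp h6).norm
      refine le_of_tendsto h7 ?_
      filter_upwards [] with n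
      exact (hTy n).trans (mul_le_mul_of_nonneg_left (h_norm_y n) (Real.exp_nonneg _))
    have hop : ‖T 1‖ ≤ θ := (T 1).opNorm_le_bound (Real.exp_nonneg _) key
    rw [hT.norm_eq 1 zero_le_one] at hop
    have h := Real.exp_le_exp.1 hop
    linarith

end Statement5Aux

open Statement5Aux in
/-- Let `L` be a selfadjoint operator in `L²(X, m)` (with `(X, m)` σ-finite),
bounded below, with `E0` the infimum of the spectrum of `L`, and assume that the semigroup
`(e^{-tL})_{t≥0}` is positivity improving (i.e., `e^{-tL} f` is strictly positive for every
positive `f` and every `t > 0`). Then `lim_{t→∞} (log ⟪f, e^{-tL} g⟫)/t = -E0` for all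
positive `f` and `g` in `L²(X, m)`. Here `f` is positive if `⟪f, f⟫ > 0` and `f ≥ 0` a.e.,
equivalently `0 ≤ f` and `f ≠ 0` in `L²(X, m)`. -/
theorem statement5 {X : Type*} [MeasurableSpace X] (m : Measure X) [SigmaFinite m]
    (T : ℝ → Lp ℝ 2 m →L[ℝ] Lp ℝ 2 m) (ρ : Lp ℝ 2 m → Measure ℝ) (E0 : ℝ)
    (hT : IsHeatSemigroupOf T ρ E0)
    (hpi : ∀ t : ℝ, 0 < t → ∀ f : Lp ℝ 2 m, 0 ≤ f → f ≠ 0 → ∀ᵐ x ∂m, 0 < (T t f) x)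
    (f g : Lp ℝ 2 m)
    (hf : 0 ≤ f) (hf' : f ≠ 0) (hg : 0 ≤ g) (hg' : g ≠ 0) :
    Tendsto (fun t : ℝ => Real.log ⟪f, T t g⟫_ℝ / t) atTop (𝓝 (-E0)) := by
  have hF := hpi 1 one_pos f hf hf'
  have hG := hpi 1 one_pos g hg hg'
  set W : Lp ℝ 2 m := (T 1 f) ⊓ (T 1 g) with hWdef
  have hWpos : ∀ᵐ x ∂m, 0 < W x := by
    filter_upwards [hF, hG, Lp.coeFn_inf (T 1 f) (T 1 g)] with x h1 h2 h3
    rw [hWdef]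
    rw [h3, Pi.inf_apply]
    exact lt_inf_iff.2 ⟨h1, h2⟩
  have hW0 : 0 ≤ W := by
    refine (Lp.coeFn_nonneg W).1 ?_
    filter_upwards [hWpos] with x hx using hx.le
  have hTg0 : 0 ≤ T 1 g := T_nonneg hT hpi zero_le_one hg
  -- key comparison
  have key1 : ∀ t : ℝ, 0 ≤ t → ⟪W, T t W⟫_ℝ ≤ ⟪f, T (t + 2) g⟫_ℝ := by
    intro t ht
    have e1 : T (t + 2) g = T 1 (T t (T 1 g)) := by
      have h1 : t + 2 = 1 + (t + 1) := by ring
      rw [h1, hT.semigroup 1 (t + 1) zero_le_one (by linarith),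
        hT.semigroup t 1 ht zero_le_one]
      simp [ContinuousLinearMap.comp_apply]
    have step1 : ⟪W, T t W⟫_ℝ ≤ ⟪W, T t (T 1 g)⟫_ℝ := by
      have h0 := inner_nonneg_of_nonneg W (T t (T 1 g - W)) hW0
        (T_nonneg hT hpi ht (sub_nonneg.2 (inf_le_right : W ≤ T 1 g)))
      rw [map_sub, inner_sub_right] at h0
      linarith
    have step2 : ⟪W, T t (T 1 g)⟫_ℝ ≤ ⟪T 1 f, T t (T 1 g)⟫_ℝ := by
      have h0 := inner_nonneg_of_nonneg (T 1 f - W) (T t (T 1 g))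
        (sub_nonneg.2 (inf_le_left : W ≤ T 1 f)) (T_nonneg hT hpi ht hTg0)
      rw [inner_sub_left] at h0
      linarith
    have step3 : ⟪T 1 f, T t (T 1 g)⟫_ℝ = ⟪f, T (t + 2) g⟫_ℝ := by
      rw [e1, hT.symm 1 zero_le_one f (T t (T 1 g))]
    linarith
  -- lower bound family
  have lower : ∀ ε : ℝ, 0 < ε → ∃ c : ℝ, 0 < c ∧ ∀ t : ℝ, 2 ≤ t →
      Real.exp (Real.log c + 2 * (E0 + ε) - t * (E0 + ε)) ≤ ⟪f, T t g⟫_ℝ := by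
    intro ε hε
    obtain ⟨c, hc, hcb⟩ := lemmaA hT hpi hWpos hε
    refine ⟨c, hc, fun t ht => ?_⟩
    have h1 := hcb (t - 2) (by linarith)
    have h2 := key1 (t - 2) (by linarith)
    have h3 : t - 2 + 2 = t := by ring
    rw [h3] at h2
    calc Real.exp (Real.log c + 2 * (E0 + ε) - t * (E0 + ε))
        = c * Real.exp (-((t - 2) * (E0 + ε))) := by
          rw [show Real.log c + 2 * (E0 + ε) - t * (E0 + ε)
              = Real.log c + -((t - 2) * (E0 + ε)) by ring,
            Real.exp_add, Real.exp_log hc]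
      _ ≤ ⟪W, T (t - 2) W⟫_ℝ := h1
      _ ≤ ⟪f, T t g⟫_ℝ := h2
  -- upper bound
  have hfn : (0:ℝ) < ‖f‖ := norm_pos_iff.2 hf'
  have hgn : (0:ℝ) < ‖g‖ := norm_pos_iff.2 hg'
  have upper : ∀ t : ℝ, 0 ≤ t →
      ⟪f, T t g⟫_ℝ ≤ Real.exp (Real.log (‖f‖ * ‖g‖) - t * E0) := by
    intro t ht
    calc ⟪f, T t g⟫_ℝ ≤ ‖f‖ * ‖T t g‖ := real_inner_le_norm _ _
      _ ≤ ‖f‖ * (‖T t‖ * ‖g‖) :=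
          mul_le_mul_of_nonneg_left ((T t).le_opNorm g) (norm_nonneg f)
      _ = Real.exp (Real.log (‖f‖ * ‖g‖) - t * E0) := by
          rw [hT.norm_eq t ht,
            show Real.log (‖f‖ * ‖g‖) - t * E0 = Real.log (‖f‖ * ‖g‖) + -(t * E0) by ring,
            Real.exp_add, Real.exp_log (by positivity)]
          ring
  -- conclude
  rw [tendsto_order]
  constructor
  · intro a ha
    set ε : ℝ := (-E0 - a) / 2 with hεdef
    have hε : 0 < ε := by
      rw [hεdef]; linarith
    obtain ⟨c, hc, hcb⟩ := lower ε hε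
    have haux : Tendsto (fun t : ℝ => (Real.log c + 2 * (E0 + ε)) / t - (E0 + ε))
        atTop (𝓝 (0 - (E0 + ε))) :=
      (tendsto_const_nhds.div_atTop tendsto_id).sub tendsto_const_nhds
    have hev1 : ∀ᶠ t in atTop, a < (Real.log c + 2 * (E0 + ε)) / t - (E0 + ε) := by
      refine haux.eventually (eventually_gt_nhds ?_)
      rw [hεdef]; linarith
    filter_upwards [hev1, eventually_ge_atTop (2:ℝ)] with t h1 h2
    have ht0 : (0:ℝ) < t := by linarith
    have hexp := hcb t h2
    have hlog : Real.log c + 2 * (E0 + ε) - t * (E0 + ε) ≤ Real.log ⟪f, T t g⟫_ℝ := by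
      rw [← Real.log_exp (Real.log c + 2 * (E0 + ε) - t * (E0 + ε))]
      exact Real.log_le_log (Real.exp_pos _) hexp
    have hdiv : (Real.log c + 2 * (E0 + ε) - t * (E0 + ε)) / t
        ≤ Real.log ⟪f, T t g⟫_ℝ / t := by gcongr
    have heq : (Real.log c + 2 * (E0 + ε) - t * (E0 + ε)) / t
        = (Real.log c + 2 * (E0 + ε)) / t - (E0 + ε) := by
      field_simp
    rw [heq] at hdiv
    linarith
  · intro b hb
    obtain ⟨c, hc, hcb⟩ := lower 1 one_pos
    have haux : Tendsto (fun t : ℝ => Real.log (‖f‖ * ‖g‖) / t - E0)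
        atTop (𝓝 (0 - E0)) :=
      (tendsto_const_nhds.div_atTop tendsto_id).sub tendsto_const_nhds
    have hev1 : ∀ᶠ t in atTop, Real.log (‖f‖ * ‖g‖) / t - E0 < b :=
      haux.eventually (eventually_lt_nhds (by linarith : 0 - E0 < b))
    filter_upwards [hev1, eventually_ge_atTop (2:ℝ)] with t h1 h2
    have ht0 : (0:ℝ) < t := by linarith
    have hpos : 0 < ⟪f, T t g⟫_ℝ := lt_of_lt_of_le (Real.exp_pos _) (hcb t h2)
    have hlog : Real.log ⟪f, T t g⟫_ℝ ≤ Real.log (‖f‖ * ‖g‖) - t * E0 := by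
      rw [← Real.log_exp (Real.log (‖f‖ * ‖g‖) - t * E0)]
      exact Real.log_le_log hpos (upper t (by linarith))
    have hdiv : Real.log ⟪f, T t g⟫_ℝ / t ≤ (Real.log (‖f‖ * ‖g‖) - t * E0) / t := by
      gcongr
    have heq : (Real.log (‖f‖ * ‖g‖) - t * E0) / t = Real.log (‖f‖ * ‖g‖) / t - E0 := by
      field_simp
    rw [heq] at hdiv
    linarith
end
end

section
/- Let L be a selfadjoint operator in L²(X, m), bounded below, with E0 the infimum of the spectrum of L, and assume that the semigroup (e^{-tL})_{t≥0} is positivity improving. Then for every positive f ∈ L²(X, m) one has E0 = inf supp(ρ_f), and in particular 1_{[E0, E0+δ)}(L) f ≠ 0 for every δ > 0. -/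
open MeasureTheory Filter Topology
open scoped InnerProductSpace ENNReal

noncomputable section

section Aux

lemma st6_le_of_sq_le_sq {a b : ℝ} (ha : 0 ≤ a) (hb : 0 ≤ b) (h : a ^ 2 ≤ b ^ 2) : a ≤ b := by
  nlinarith

variable {X : Type*} [MeasurableSpace X] {m : Measure X}
variable {T : ℝ → Lp ℝ 2 m →L[ℝ] Lp ℝ 2 m} {ρ : Lp ℝ 2 m → Measure ℝ} {E0 : ℝ}

lemma st6_inner_nonneg (a b : Lp ℝ 2 m) (ha : 0 ≤ a) (hb : 0 ≤ b) : (0:ℝ) ≤ ⟪a, b⟫_ℝ := by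
  rw [MeasureTheory.L2.inner_def]
  refine integral_nonneg_of_ae ?_
  filter_upwards [(Lp.coeFn_nonneg a).mpr ha, (Lp.coeFn_nonneg b).mpr hb] with x hax hbx
  simp only [Pi.zero_apply] at hax hbx
  simpa [RCLike.inner_apply] using mul_nonneg hbx hax

lemma st6_Tpos (hT : IsHeatSemigroupOf T ρ E0)
    (hpi : ∀ t : ℝ, 0 < t → ∀ f : Lp ℝ 2 m, 0 ≤ f → f ≠ 0 → ∀ᵐ x ∂m, 0 < (T t f) x)
    {t : ℝ} (ht : 0 ≤ t) {b : Lp ℝ 2 m} (hb : 0 ≤ b) : 0 ≤ T t b := by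
  rcases ht.eq_or_lt with h | h
  · rw [← h, hT.map_zero]; simpa using hb
  · by_cases hb0 : b = 0
    · simp [hb0]
    · refine (Lp.coeFn_nonneg _).mp ?_
      filter_upwards [hpi t h b hb hb0] with x hx
      simpa using hx.le

lemma st6_half_comp (hT : IsHeatSemigroupOf T ρ E0) {t : ℝ} (ht : 0 ≤ t) :
    T t = T (t/2) ∘L T (t/2) := by
  have := hT.semigroup (t/2) (t/2) (by linarith) (by linarith)
  rwa [add_halves] at this

lemma st6_psi_sq (hT : IsHeatSemigroupOf T ρ E0) {t : ℝ} (ht : 0 ≤ t) (z : Lp ℝ 2 m) :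
    ⟪z, T t z⟫_ℝ = ‖T (t/2) z‖ ^ 2 := by
  rw [st6_half_comp hT ht, ContinuousLinearMap.comp_apply, ← hT.symm (t/2) (by linarith),
    real_inner_self_eq_norm_sq]

lemma st6_cs (hT : IsHeatSemigroupOf T ρ E0) {t : ℝ} (ht : 0 ≤ t) (a b : Lp ℝ 2 m) :
    |⟪a, T t b⟫_ℝ| ≤ ‖T (t/2) a‖ * ‖T (t/2) b‖ := by
  rw [st6_half_comp hT ht, ContinuousLinearMap.comp_apply, ← hT.symm (t/2) (by linarith)]
  exact abs_real_inner_le_norm _ _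

lemma st6_mono (hT : IsHeatSemigroupOf T ρ E0)
    (hpi : ∀ t : ℝ, 0 < t → ∀ f : Lp ℝ 2 m, 0 ≤ f → f ≠ 0 → ∀ᵐ x ∂m, 0 < (T t f) x)
    {t : ℝ} (ht : 0 ≤ t) {a b : Lp ℝ 2 m} (ha : 0 ≤ a) (hab : a ≤ b) :
    ⟪a, T t a⟫_ℝ ≤ ⟪b, T t b⟫_ℝ := by
  have hd : 0 ≤ b - a := sub_nonneg.mpr hab
  have h1 := st6_inner_nonneg a (T t (b - a)) ha (st6_Tpos hT hpi ht hd)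
  have h2 := st6_inner_nonneg (b - a) (T t a) hd (st6_Tpos hT hpi ht ha)
  have h3 := st6_inner_nonneg (b - a) (T t (b - a)) hd (st6_Tpos hT hpi ht hd)
  have hba : b = a + (b - a) := by abel
  have expand : ⟪b, T t b⟫_ℝ
      = ⟪a, T t a⟫_ℝ + ⟪a, T t (b - a)⟫_ℝ + ⟪b - a, T t a⟫_ℝ + ⟪b - a, T t (b - a)⟫_ℝ := by
    conv_lhs => rw [hba]
    simp only [map_add, inner_add_left, inner_add_right]
    ring
  linarith

lemma st6_ae_lb (hT : IsHeatSemigroupOf T ρ E0) (z : Lp ℝ 2 m) {c : ℝ}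
    (hc : ρ z (Set.Iio c) = 0) : ∀ᵐ s ∂(ρ z), c ≤ s := by
  rw [ae_iff]
  have : {s : ℝ | ¬ c ≤ s} = Set.Iio c := by ext s; simp [not_le]
  rwa [this]

lemma st6_integrable (hT : IsHeatSemigroupOf T ρ E0) (z : Lp ℝ 2 m) {t : ℝ} (ht : 0 ≤ t) :
    Integrable (fun s => Real.exp (-(t * s))) (ρ z) := by
  haveI : IsFiniteMeasure (ρ z) := ⟨(hT.finite z).lt_top⟩
  refine Integrable.mono' (integrable_const (Real.exp (-(t * E0)))) ?_ ?_
  · exact (Real.continuous_exp.comp (continuous_const.mul continuous_id).neg).aestronglyMeasurable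
  · filter_upwards [st6_ae_lb hT z (hT.support_bddBelow z)] with s hs
    rw [Real.norm_eq_abs, abs_of_pos (Real.exp_pos _)]
    exact Real.exp_le_exp.mpr (by nlinarith)

lemma st6_norm_sq_eq (hT : IsHeatSemigroupOf T ρ E0) (z : Lp ℝ 2 m) :
    ‖z‖ ^ 2 = (ρ z Set.univ).toReal := by
  haveI : IsFiniteMeasure (ρ z) := ⟨(hT.finite z).lt_top⟩
  have h := hT.inner_eq z 0 le_rfl
  rw [hT.map_zero] at h
  simp only [ContinuousLinearMap.one_apply, zero_mul, neg_zero, Real.exp_zero] at h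
  rw [← real_inner_self_eq_norm_sq, h, integral_const, smul_eq_mul, mul_one]; rfl

lemma st6_upper (hT : IsHeatSemigroupOf T ρ E0) (z : Lp ℝ 2 m) {c t : ℝ}
    (hc : ρ z (Set.Iio c) = 0) (ht : 0 ≤ t) :
    ⟪z, T t z⟫_ℝ ≤ Real.exp (-(t * c)) * (ρ z Set.univ).toReal := by
  haveI : IsFiniteMeasure (ρ z) := ⟨(hT.finite z).lt_top⟩
  rw [hT.inner_eq z t ht]
  calc ∫ s, Real.exp (-(t * s)) ∂(ρ z) ≤ ∫ _s, Real.exp (-(t * c)) ∂(ρ z) := by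
        refine integral_mono_ae (st6_integrable hT z ht) (integrable_const _) ?_
        filter_upwards [st6_ae_lb hT z hc] with s hs
        exact Real.exp_le_exp.mpr (by nlinarith)
    _ = Real.exp (-(t * c)) * (ρ z Set.univ).toReal := by
        rw [integral_const, smul_eq_mul]; exact mul_comm _ _

lemma st6_lower_vanish (hT : IsHeatSemigroupOf T ρ E0) (z : Lp ℝ 2 m) {c C : ℝ}
    (hb : ∀ t : ℝ, 0 ≤ t → ⟪z, T t z⟫_ℝ ≤ C * Real.exp (-(t * c))) :
    ρ z (Set.Iio c) = 0 := by
  haveI : IsFiniteMeasure (ρ z) := ⟨(hT.finite z).lt_top⟩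
  have hIic : ∀ s₀ : ℝ, s₀ < c → ρ z (Set.Iic s₀) = 0 := by
    intro s₀ hs₀
    have key : ∀ t : ℝ, 0 ≤ t →
        (ρ z (Set.Iic s₀)).toReal * Real.exp (-(t * s₀)) ≤ C * Real.exp (-(t * c)) := by
      intro t ht
      have h1 : Real.exp (-(t * s₀)) * (ρ z (Set.Iic s₀)).toReal
          ≤ ∫ s in Set.Iic s₀, Real.exp (-(t * s)) ∂(ρ z) := by
        refine setIntegral_ge_of_const_le_real measurableSet_Iic (measure_ne_top _ _) ?_
          ((st6_integrable hT z ht).integrableOn)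
        intro s hs
        exact Real.exp_le_exp.mpr (by simp only [Set.mem_Iic] at hs; nlinarith)
      have h2 : ∫ s in Set.Iic s₀, Real.exp (-(t * s)) ∂(ρ z)
          ≤ ∫ s, Real.exp (-(t * s)) ∂(ρ z) :=
        setIntegral_le_integral (st6_integrable hT z ht)
          (Eventually.of_forall fun s => (Real.exp_pos _).le)
      have h4 := hb t ht
      rw [hT.inner_eq z t ht] at h4
      nlinarith
    have hrc : (0:ℝ) < c - s₀ := by linarith
    set r := (ρ z (Set.Iic s₀)).toReal with hr
    have key2 : ∀ t : ℝ, 0 ≤ t → r ≤ C * Real.exp (-(t * (c - s₀))) := by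
      intro t ht
      have e1 : (0:ℝ) < Real.exp (-(t * s₀)) := Real.exp_pos _
      have h := key t ht
      have hexp : C * Real.exp (-(t * c))
          = (C * Real.exp (-(t * (c - s₀)))) * Real.exp (-(t * s₀)) := by
        rw [mul_assoc, ← Real.exp_add]
        congr 2
        ring
      rw [hexp] at h
      exact le_of_mul_le_mul_right h e1
    have htend : Tendsto (fun t : ℝ => C * Real.exp (-(t * (c - s₀)))) atTop (𝓝 0) := by
      have h1 : Tendsto (fun t : ℝ => -(t * (c - s₀))) atTop atBot :=
        tendsto_neg_atTop_atBot.comp (tendsto_id.atTop_mul_const hrc)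
      simpa using (Real.tendsto_exp_atBot.comp h1).const_mul C
    have hr0 : r ≤ 0 :=
      ge_of_tendsto htend ((eventually_ge_atTop (0:ℝ)).mono fun t ht => key2 t ht)
    have hr1 : r = 0 := le_antisymm hr0 ENNReal.toReal_nonneg
    have := (ENNReal.toReal_eq_zero_iff _).mp hr1
    exact this.resolve_right (measure_ne_top _ _)
  have hsub : Set.Iio c ⊆ ⋃ n : ℕ, Set.Iic (c - 1/(n+1)) := by
    intro s hs
    obtain ⟨n, hn⟩ := exists_nat_one_div_lt (K := ℝ) (sub_pos.mpr hs)
    refine Set.mem_iUnion.mpr ⟨n, ?_⟩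
    simp only [Set.mem_Iic]
    linarith
  refine measure_mono_null hsub (measure_iUnion_null fun n => hIic _ ?_)
  have h : (0:ℝ) < 1/((n:ℝ)+1) := by positivity
  linarith

lemma st6_trunc_tendsto {w u : Lp ℝ 2 m} (hw : 0 ≤ w) (hu : ∀ᵐ x ∂m, 0 < u x) :
    Tendsto (fun n : ℕ => w ⊓ ((n:ℝ) • u)) atTop (𝓝 w) := by
  set vn := fun n : ℕ => w - w ⊓ ((n:ℝ) • u) with hvn
  have hvco : ∀ n : ℕ, ⇑(vn n) =ᵐ[m] fun x => w x - min (w x) ((n:ℝ) * u x) := by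
    intro n
    filter_upwards [Lp.coeFn_sub w (w ⊓ ((n:ℝ) • u)), Lp.coeFn_inf w ((n:ℝ) • u),
      Lp.coeFn_smul ((n:ℝ)) u] with x h1 h2 h3
    have h3' : (⇑((n:ℝ) • u)) x = (n:ℝ) * u x := by
      rw [h3]; simp
    simp only [hvn, h1, Pi.sub_apply, h2, Pi.inf_apply, h3']
  have hwnn := (Lp.coeFn_nonneg w).mpr hw
  have hbound : Integrable (fun x => w x * w x) m := by
    have := MeasureTheory.L2.integrable_inner (𝕜 := ℝ) w w
    simpa [RCLike.inner_apply, ← pow_two] using this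
  have hsq : Tendsto (fun n : ℕ => ∫ x, (vn n) x * (vn n) x ∂m) atTop (𝓝 0) := by
    have h0 : (0:ℝ) = ∫ x, (0:ℝ) ∂m := by simp
    rw [h0]
    refine tendsto_integral_of_dominated_convergence (fun x => w x * w x)
      (fun n => ((Lp.aestronglyMeasurable (vn n)).mul (Lp.aestronglyMeasurable (vn n))))
      hbound ?_ ?_
    · intro n
      filter_upwards [hvco n, hwnn, hu] with x hx hwx hux
      simp only [Pi.zero_apply] at hwx
      have h0m : 0 ≤ min (w x) ((n:ℝ) * u x) := le_min hwx (by positivity)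
      have h1m : min (w x) ((n:ℝ) * u x) ≤ w x := min_le_left _ _
      rw [hx, Real.norm_eq_abs, abs_of_nonneg (mul_self_nonneg _)]
      nlinarith
    · have hvall : ∀ᵐ x ∂m, ∀ n : ℕ, (vn n) x = w x - min (w x) ((n:ℝ) * u x) :=
        ae_all_iff.mpr hvco
      filter_upwards [hvall, hwnn, hu] with x hx hwx hux
      simp only [Pi.zero_apply] at hwx
      obtain ⟨n₀, hn₀⟩ := exists_nat_ge (w x / u x)
      have hev : (fun n : ℕ => (vn n) x * (vn n) x) =ᶠ[atTop] fun _ => (0:ℝ) := by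
        refine eventually_atTop.mpr ⟨n₀, fun n hn => ?_⟩
        have hcast : (n₀:ℝ) ≤ (n:ℝ) := by exact_mod_cast hn
        have hgood : w x ≤ (n:ℝ) * u x := by
          have hdiv : w x / u x ≤ (n:ℝ) := le_trans hn₀ hcast
          calc w x = (w x / u x) * u x := by field_simp
            _ ≤ (n:ℝ) * u x := mul_le_mul_of_nonneg_right hdiv hux.le
        have hzero : (vn n : X → ℝ) x = 0 := by
          rw [hx n, min_eq_left hgood]; ring
        simpa using hzero
      exact Tendsto.congr' hev.symm tendsto_const_nhds
  have hnorm : ∀ n : ℕ, ‖vn n‖ ^ 2 = ∫ x, (vn n) x * (vn n) x ∂m := by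
    intro n
    rw [← real_inner_self_eq_norm_sq, MeasureTheory.L2.inner_def]
    refine integral_congr_ae (Eventually.of_forall fun x => ?_)
    simp [RCLike.inner_apply]; ring
  have hsq' : Tendsto (fun n : ℕ => ‖vn n‖ ^ 2) atTop (𝓝 0) := by
    refine hsq.congr fun n => (hnorm n).symm
  have hvnorm : Tendsto (fun n : ℕ => ‖vn n‖) atTop (𝓝 0) := by
    have h := (Real.continuous_sqrt.tendsto 0).comp hsq'
    simp only [Function.comp_def, Real.sqrt_zero] at h
    refine h.congr fun n => ?_
    rw [Real.sqrt_sq (norm_nonneg _)]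
  rw [tendsto_iff_norm_sub_tendsto_zero]
  refine hvnorm.congr fun n => ?_
  rw [← norm_neg]
  congr 1
  simp [hvn]

end Aux

set_option maxHeartbeats 1000000 in
/-- Let `L` be a selfadjoint operator in `L²(X, m)` (with `(X, m)` σ-finite),
bounded below, with `E0` the infimum of the spectrum of `L`, and assume that the semigroup
`(e^{-tL})_{t≥0}` is positivity improving. Then for every positive `f ∈ L²(X, m)` one has
`E0 = inf supp(ρ_f)`, and in particular the spectral projection `1_{[E0, E0+δ)}(L)` does not
annihilate `f` for any `δ > 0`; since `‖1_S(L) f‖² = ρ_f(S)`, the latter says precisely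
`ρ_f([E0, E0 + δ)) ≠ 0`. -/
theorem statement6 {X : Type*} [MeasurableSpace X] (m : Measure X) [SigmaFinite m]
    (T : ℝ → Lp ℝ 2 m →L[ℝ] Lp ℝ 2 m) (ρ : Lp ℝ 2 m → Measure ℝ) (E0 : ℝ)
    (hT : IsHeatSemigroupOf T ρ E0)
    (hpi : ∀ t : ℝ, 0 < t → ∀ f : Lp ℝ 2 m, 0 ≤ f → f ≠ 0 → ∀ᵐ x ∂m, 0 < (T t f) x)
    (f : Lp ℝ 2 m) (hf : 0 ≤ f) (hf' : f ≠ 0) :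
    E0 = suppInf (ρ f) ∧ ∀ δ : ℝ, 0 < δ → ρ f (Set.Ico E0 (E0 + δ)) ≠ 0 := by
  have key : ∀ δ : ℝ, 0 < δ → ρ f (Set.Ico E0 (E0 + δ)) ≠ 0 := by
    intro δ hδ h0
    -- the measure of f vanishes below E0 + δ
    have hIio : ρ f (Set.Iio (E0 + δ)) = 0 := by
      have hun : Set.Iio (E0 + δ) = Set.Iio E0 ∪ Set.Ico E0 (E0 + δ) := by
        ext s
        simp only [Set.mem_Iio, Set.mem_union, Set.mem_Ico]
        constructor
        · intro h
          by_cases h2 : s < E0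
          · exact Or.inl h2
          · exact Or.inr ⟨le_of_not_gt h2, h⟩
        · rintro (h | ⟨_, h⟩)
          · linarith
          · exact h
      rw [hun]
      exact measure_union_null (hT.support_bddBelow f) h0
    set u := T 1 f with hu
    have hupos : ∀ᵐ x ∂m, 0 < u x := hpi 1 one_pos f hf hf'
    have hu0 : 0 ≤ u := st6_Tpos hT hpi zero_le_one hf
    -- ψ_u t = ψ_f (t+2)
    have hpsiu : ∀ t : ℝ, 0 ≤ t → ⟪u, T t u⟫_ℝ = ⟪f, T (t + 2) f⟫_ℝ := by
      intro t ht
      have a1 : T (t + 2) = T 1 ∘L T (t + 1) := by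
        have h := hT.semigroup 1 (t + 1) zero_le_one (by linarith)
        rwa [show (1 + (t + 1)) = t + 2 by ring] at h
      have a2 : T (t + 1) = T t ∘L T 1 := hT.semigroup t 1 ht zero_le_one
      rw [a1, a2]
      simp only [ContinuousLinearMap.comp_apply]
      rw [← hT.symm 1 zero_le_one f (T t (T 1 f))]
    have hVbound : ∀ z : Lp ℝ 2 m, ρ z (Set.Iio (E0 + δ)) = 0 → ∀ t : ℝ, 0 ≤ t →
        ⟪z, T t z⟫_ℝ ≤ Real.exp (-(t * (E0 + δ))) * ‖z‖ ^ 2 := by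
      intro z hz t ht
      have h := st6_upper hT z hz ht
      rwa [← st6_norm_sq_eq hT z] at h
    -- Step A : everything dominated by a multiple of u has measure vanishing below E0 + δ
    have stepA : ∀ (n : ℕ) (z : Lp ℝ 2 m), 0 ≤ z → z ≤ (n:ℝ) • u →
        ρ z (Set.Iio (E0 + δ)) = 0 := by
      intro n z hz hzn
      refine st6_lower_vanish hT z
        (C := (n:ℝ)^2 * (Real.exp (-(2 * (E0 + δ))) * (ρ f Set.univ).toReal)) ?_
      intro t ht
      have h1 : ⟪z, T t z⟫_ℝ ≤ ⟪(n:ℝ) • u, T t ((n:ℝ) • u)⟫_ℝ := st6_mono hT hpi ht hz hzn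
      have h2 : ⟪(n:ℝ) • u, T t ((n:ℝ) • u)⟫_ℝ = (n:ℝ)^2 * ⟪u, T t u⟫_ℝ := by
        rw [(T t).map_smul, real_inner_smul_left, real_inner_smul_right]
        ring
      have h3 : ⟪f, T (t + 2) f⟫_ℝ ≤ Real.exp (-((t + 2) * (E0 + δ))) * (ρ f Set.univ).toReal :=
        st6_upper hT f hIio (by linarith)
      have h4 : ⟪z, T t z⟫_ℝ ≤ (n:ℝ)^2 * ⟪f, T (t + 2) f⟫_ℝ := by
        rw [← hpsiu t ht, ← h2]; exact h1
      have h5 : Real.exp (-((t + 2) * (E0 + δ)))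
          = Real.exp (-(2 * (E0 + δ))) * Real.exp (-(t * (E0 + δ))) := by
        rw [← Real.exp_add]; congr 1; ring
      have h6 : (n:ℝ)^2 * ⟪f, T (t + 2) f⟫_ℝ
          ≤ (n:ℝ)^2 * (Real.exp (-((t + 2) * (E0 + δ))) * (ρ f Set.univ).toReal) :=
        mul_le_mul_of_nonneg_left h3 (by positivity)
      calc ⟪z, T t z⟫_ℝ ≤ (n:ℝ)^2 * (Real.exp (-((t + 2) * (E0 + δ))) * (ρ f Set.univ).toReal) :=
            le_trans h4 h6
        _ = (n:ℝ)^2 * (Real.exp (-(2 * (E0 + δ))) * (ρ f Set.univ).toReal)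
            * Real.exp (-(t * (E0 + δ))) := by rw [h5]; ring
    -- Step B : every nonnegative z has measure vanishing below E0 + δ
    have stepB : ∀ w : Lp ℝ 2 m, 0 ≤ w → ρ w (Set.Iio (E0 + δ)) = 0 := by
      intro w hw
      refine st6_lower_vanish hT w (C := ‖w‖ ^ 2) ?_
      intro t ht
      have htr := st6_trunc_tendsto (u := u) hw hupos
      have hcont : Continuous fun v : Lp ℝ 2 m => ⟪v, T t v⟫_ℝ :=
        continuous_id.inner (T t).continuous
      have h1 : Tendsto (fun n : ℕ => ⟪w ⊓ ((n:ℝ) • u), T t (w ⊓ ((n:ℝ) • u))⟫_ℝ) atTop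
          (𝓝 ⟪w, T t w⟫_ℝ) := (hcont.tendsto w).comp htr
      have h2 : Tendsto (fun n : ℕ => Real.exp (-(t * (E0 + δ))) * ‖w ⊓ ((n:ℝ) • u)‖ ^ 2) atTop
          (𝓝 (Real.exp (-(t * (E0 + δ))) * ‖w‖ ^ 2)) := by
        have hn : Tendsto (fun n : ℕ => ‖w ⊓ ((n:ℝ) • u)‖) atTop (𝓝 ‖w‖) :=
          (continuous_norm.tendsto w).comp htr
        exact ((hn.pow 2).const_mul _)
      have hle : ∀ n : ℕ, ⟪w ⊓ ((n:ℝ) • u), T t (w ⊓ ((n:ℝ) • u))⟫_ℝ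
          ≤ Real.exp (-(t * (E0 + δ))) * ‖w ⊓ ((n:ℝ) • u)‖ ^ 2 := by
        intro n
        have hn0 : 0 ≤ (n:ℝ) • u := by
          refine (Lp.coeFn_nonneg _).mp ?_
          filter_upwards [Lp.coeFn_smul (n:ℝ) u, (Lp.coeFn_nonneg u).mpr hu0] with x h1 h2
          simp only [Pi.zero_apply] at h2 ⊢
          rw [h1]
          simpa using mul_nonneg (by positivity : (0:ℝ) ≤ (n:ℝ)) h2
        have hinf0 : 0 ≤ w ⊓ ((n:ℝ) • u) := le_inf hw hn0
        exact hVbound _ (stepA n _ hinf0 inf_le_right) t ht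
      have := le_of_tendsto_of_tendsto' h1 h2 hle
      linarith [this]
    -- Step C : every z has measure vanishing below E0 + δ
    have stepC : ∀ z : Lp ℝ 2 m, ρ z (Set.Iio (E0 + δ)) = 0 := by
      intro z
      refine st6_lower_vanish hT z (C := (‖z⁺‖ + ‖z⁻‖) ^ 2) ?_
      intro t ht
      have hzp := stepB (z⁺) (posPart_nonneg z)
      have hzm := stepB (z⁻) (negPart_nonneg z)
      set q := Real.exp (-(t * (E0 + δ))) with hq
      have hq0 : (0:ℝ) ≤ q := (Real.exp_pos _).le
      set A := ‖T (t/2) (z⁺)‖ with hA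
      set B := ‖T (t/2) (z⁻)‖ with hB
      have hA2 : A ^ 2 ≤ q * ‖z⁺‖ ^ 2 := by
        rw [hA, ← st6_psi_sq hT ht]; exact hVbound _ hzp t ht
      have hB2 : B ^ 2 ≤ q * ‖z⁻‖ ^ 2 := by
        rw [hB, ← st6_psi_sq hT ht]; exact hVbound _ hzm t ht
      have hAle : A ≤ Real.sqrt q * ‖z⁺‖ := by
        refine st6_le_of_sq_le_sq (norm_nonneg _) (by positivity) ?_
        rw [mul_pow, Real.sq_sqrt hq0]; exact hA2
      have hBle : B ≤ Real.sqrt q * ‖z⁻‖ := by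
        refine st6_le_of_sq_le_sq (norm_nonneg _) (by positivity) ?_
        rw [mul_pow, Real.sq_sqrt hq0]; exact hB2
      have hdecomp : z = z⁺ - z⁻ := (posPart_sub_negPart z).symm
      have e1 : ⟪z, T t z⟫_ℝ = ⟪z⁺, T t (z⁺)⟫_ℝ - ⟪z⁺, T t (z⁻)⟫_ℝ
          - ⟪z⁻, T t (z⁺)⟫_ℝ + ⟪z⁻, T t (z⁻)⟫_ℝ := by
        conv_lhs => rw [hdecomp]
        simp only [map_sub, inner_sub_left, inner_sub_right]
        ring
      have c1 := st6_cs hT ht (z⁺) (z⁻)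
      have c2 := st6_cs hT ht (z⁻) (z⁺)
      have p1 : ⟪z⁺, T t (z⁺)⟫_ℝ = A ^ 2 := st6_psi_sq hT ht _
      have p2 : ⟪z⁻, T t (z⁻)⟫_ℝ = B ^ 2 := st6_psi_sq hT ht _
      have habs1 : - ⟪z⁺, T t (z⁻)⟫_ℝ ≤ A * B := by
        have := neg_abs_le ⟪z⁺, T t (z⁻)⟫_ℝ
        linarith [c1]
      have habs2 : - ⟪z⁻, T t (z⁺)⟫_ℝ ≤ B * A := by
        have := neg_abs_le ⟪z⁻, T t (z⁺)⟫_ℝ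
        linarith [c2]
      have hAB : ⟪z, T t z⟫_ℝ ≤ (A + B) ^ 2 := by
        rw [e1, p1, p2]; nlinarith
      have hfin : (A + B) ^ 2 ≤ q * (‖z⁺‖ + ‖z⁻‖) ^ 2 := by
        have hsq : Real.sqrt q * ‖z⁺‖ + Real.sqrt q * ‖z⁻‖
            = Real.sqrt q * (‖z⁺‖ + ‖z⁻‖) := by ring
        have h1 : A + B ≤ Real.sqrt q * (‖z⁺‖ + ‖z⁻‖) := by
          rw [← hsq]; exact add_le_add hAle hBle
        have h2 : (A + B) ^ 2 ≤ (Real.sqrt q * (‖z⁺‖ + ‖z⁻‖)) ^ 2 := by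
          have hab0 : 0 ≤ A + B := by positivity
          nlinarith
        rw [mul_pow, Real.sq_sqrt hq0] at h2
        exact h2
      calc ⟪z, T t z⟫_ℝ ≤ q * (‖z⁺‖ + ‖z⁻‖) ^ 2 := le_trans hAB hfin
        _ = (‖z⁺‖ + ‖z⁻‖) ^ 2 * Real.exp (-(t * (E0 + δ))) := by rw [hq]; ring
    -- Step D : contradiction with the norm of T 1
    have hall : ∀ z : Lp ℝ 2 m, ‖T 1 z‖ ≤ Real.exp (-(E0 + δ)) * ‖z‖ := by
      intro z
      have h1 : ⟪z, T 2 z⟫_ℝ ≤ Real.exp (-(2 * (E0 + δ))) * ‖z‖ ^ 2 :=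
        hVbound z (stepC z) 2 (by norm_num)
      have h2 : ⟪z, T 2 z⟫_ℝ = ‖T 1 z‖ ^ 2 := by
        have := st6_psi_sq hT (by norm_num : (0:ℝ) ≤ 2) z
        rwa [show (2:ℝ)/2 = 1 by norm_num] at this
      refine st6_le_of_sq_le_sq (norm_nonneg _) (by positivity) ?_
      have h3 : (Real.exp (-(E0 + δ))) ^ 2 = Real.exp (-(2 * (E0 + δ))) := by
        rw [sq, ← Real.exp_add]; congr 1; ring
      rw [mul_pow, h3]
      linarith [h1, h2.symm.le, h2.le]
    have hnorm1 : ‖T 1‖ ≤ Real.exp (-(E0 + δ)) :=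
      ContinuousLinearMap.opNorm_le_bound _ (Real.exp_pos _).le hall
    rw [hT.norm_eq 1 zero_le_one] at hnorm1
    have := Real.exp_le_exp.mp hnorm1
    linarith
  refine ⟨?_, key⟩
  have hmem : E0 ∈ {E : ℝ | ∀ δ > 0, 0 < ρ f (Set.Ioo (E - δ) (E + δ))} := by
    intro δ hδ
    have h1 : Set.Ico E0 (E0 + δ) ⊆ Set.Ioo (E0 - δ) (E0 + δ) := by
      intro s hs
      exact ⟨by linarith [hs.1], hs.2⟩
    exact lt_of_lt_of_le (pos_iff_ne_zero.mpr (key δ hδ)) (measure_mono h1)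
  have hlb : ∀ E ∈ {E : ℝ | ∀ δ > 0, 0 < ρ f (Set.Ioo (E - δ) (E + δ))}, E0 ≤ E := by
    intro E hE
    by_contra hlt
    push_neg at hlt
    have hδ : (0:ℝ) < E0 - E := by linarith
    have hpos := hE (E0 - E) hδ
    have hsub : Set.Ioo (E - (E0 - E)) (E + (E0 - E)) ⊆ Set.Iio E0 := by
      intro s hs
      simp only [Set.mem_Iio]
      have := hs.2
      linarith
    have h0 : ρ f (Set.Ioo (E - (E0 - E)) (E + (E0 - E))) = 0 :=
      measure_mono_null hsub (hT.support_bddBelow f)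
    rw [h0] at hpos
    exact lt_irrefl _ hpos
  exact le_antisymm (le_csInf ⟨E0, hmem⟩ hlb) (csInf_le ⟨E0, hlb⟩ hmem)
end
end

section
/- Let L be the left shift on ℓ²(ℕ), i.e., (Lx)_k = x_{k+1}. For μ ∈ (0, 1) let y_μ := (μ^k)_{k∈ℕ} ∈ ℓ²(ℕ) and define the bounded operator L₁ on ℓ²(ℕ) by L₁ x := Lx + x₁ y_μ. Then for every λ ∈ (0, 1) with λ ≠ 2μ and every t ≥ 0, e^{tL₁} y_λ = e^{λt} y_λ + (λ/(λ − 2μ)) (e^{λt} − e^{2μt}) y_μ. -/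
open Filter Topology
open scoped InnerProductSpace ENNReal

noncomputable section

/-- `ℓ²(ℕ)`; the paper indexes sequences by `ℕ = {1, 2, …}`, so the Lean index `k : ℕ`
corresponds to the paper's index `k + 1`; in particular `x₁` is `x 0`. -/
abbrev ellTwo := lp (fun _ : ℕ => ℝ) 2

lemma exp_apply_eigen {E : Type*} [NormedAddCommGroup E] [NormedSpace ℝ E] [CompleteSpace E]
    (A : E →L[ℝ] E) (a : ℝ) (x : E) (h : A x = a • x) :
    NormedSpace.exp A x = Real.exp a • x := by
  have hpow : ∀ n : ℕ, (A ^ n) x = a ^ n • x := by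
    intro n
    induction n with
    | zero => simp
    | succ n ih =>
        rw [pow_succ, ContinuousLinearMap.mul_apply, h, map_smul, ih, smul_smul,
          pow_succ, mul_comm]
  have hs : Summable fun n : ℕ => ((Nat.factorial n : ℝ))⁻¹ • A ^ n :=
    NormedSpace.expSeries_summable' (𝕂 := ℝ) A
  have := (ContinuousLinearMap.apply ℝ E x).map_tsum hs
  rw [NormedSpace.exp_eq_tsum (𝕂 := ℝ)]
  simp only [ContinuousLinearMap.apply_apply] at this
  refine this.trans ?_
  simp only [ContinuousLinearMap.coe_smul', Pi.smul_apply, hpow, smul_smul]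
  rw [Summable.tsum_smul_const (L := SummationFilter.unconditional ℕ), Real.exp_eq_exp_ℝ, NormedSpace.exp_eq_tsum (𝕂 := ℝ)]
  · simp [smul_eq_mul]
  · have := NormedSpace.expSeries_summable' (𝕂 := ℝ) a
    simpa [smul_eq_mul] using this

/-- Let `L` be the left shift on `ℓ²(ℕ)`, i.e., `(Lx)_k = x_{k+1}`.
For `μ ∈ (0, 1)` let `y_μ := (μ^k)_{k∈ℕ} ∈ ℓ²(ℕ)` and define the bounded operator `L₁` on
`ℓ²(ℕ)` by `L₁ x := Lx + x₁ • y_μ`. Then for every `λ ∈ (0, 1)` with `λ ≠ 2μ` and every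
`t ≥ 0`, `e^{tL₁} y_λ = e^{λt} • y_λ + (λ/(λ − 2μ)) (e^{λt} − e^{2μt}) • y_μ`. -/
theorem statement7 (μ : ℝ) (hμ : μ ∈ Set.Ioo (0 : ℝ) 1)
    (yμ : ellTwo) (hyμ : ∀ k : ℕ, yμ k = μ ^ (k + 1))
    (L : ellTwo →L[ℝ] ellTwo) (hL : ∀ (x : ellTwo) (k : ℕ), (L x) k = x (k + 1))
    (L₁ : ellTwo →L[ℝ] ellTwo) (hL₁ : ∀ x : ellTwo, L₁ x = L x + x 0 • yμ)
    (lam : ℝ) (hlam : lam ∈ Set.Ioo (0 : ℝ) 1) (hne : lam ≠ 2 * μ)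
    (ylam : ellTwo) (hylam : ∀ k : ℕ, ylam k = lam ^ (k + 1))
    (t : ℝ) (ht : 0 ≤ t) :
    NormedSpace.exp (t • L₁) ylam
      = Real.exp (lam * t) • ylam
        + (lam / (lam - 2 * μ) * (Real.exp (lam * t) - Real.exp (2 * μ * t))) • yμ := by
  set c : ℝ := lam / (lam - 2 * μ) with hc
  have hsub : lam - 2 * μ ≠ 0 := sub_ne_zero.mpr hne
  -- L yμ = μ • yμ
  have hLyμ : L yμ = μ • yμ := by
    apply lp.ext; funext k
    rw [hL, lp.coeFn_smul, Pi.smul_apply, hyμ, hyμ, smul_eq_mul, pow_succ, mul_comm]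
  have hLylam : L ylam = lam • ylam := by
    apply lp.ext; funext k
    rw [hL, lp.coeFn_smul, Pi.smul_apply, hylam, hylam, smul_eq_mul, pow_succ, mul_comm]
  -- eigen equations for L₁
  have hμ0 : yμ 0 = μ := by simpa using hyμ 0
  have hlam0 : ylam 0 = lam := by simpa using hylam 0
  have hEμ : L₁ yμ = (2 * μ) • yμ := by
    rw [hL₁, hLyμ, hμ0, ← add_smul]; ring_nf
  have hz : L₁ (ylam + c • yμ) = lam • (ylam + c • yμ) := by
    rw [map_add, map_smul, hEμ, hL₁, hLylam, hlam0, smul_add, smul_smul, smul_smul]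
    rw [add_assoc, ← add_smul]
    congr 2
    have hcc : c * (lam - 2 * μ) = lam := by rw [hc]; exact div_mul_cancel₀ lam hsub
    clear_value c
    change (_ : ℝ) = _
    linear_combination -hcc
  -- eigen equations for t • L₁
  have hEμt : (t • L₁) yμ = (2 * μ * t) • yμ := by
    rw [ContinuousLinearMap.smul_apply, hEμ, smul_smul, mul_comm]
  have hzt : (t • L₁) (ylam + c • yμ) = (lam * t) • (ylam + c • yμ) := by
    rw [ContinuousLinearMap.smul_apply, hz, smul_smul, mul_comm]
  have h1 := exp_apply_eigen (t • L₁) (lam * t) _ hzt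
  have h2 := exp_apply_eigen (t • L₁) (2 * μ * t) _ hEμt
  have key : NormedSpace.exp (t • L₁) ylam
      = NormedSpace.exp (t • L₁) (ylam + c • yμ) - c • NormedSpace.exp (t • L₁) yμ := by
    rw [← map_smul, ← map_sub]; congr 1; abel
  rw [key, h1, h2, smul_add, smul_smul, smul_smul]
  rw [sub_eq_add_neg, add_assoc, ← neg_smul, ← add_smul]
  congr 2
  ring
end
end

section
/- Let L be the left shift on ℓ²(ℕ), let μ ∈ (0, 1/2), let y_μ := (μ^k)_{k∈ℕ} and define the bounded operator L₁ on ℓ²(ℕ) by L₁ x := Lx + x₁ y_μ; the semigroup (e^{tL₁})_{t≥0} is positivity improving. Then for every λ ∈ (2μ, 1) and every positive x ∈ ℓ²(ℕ), lim_{t→∞} (log⟨x, e^{tL₁} y_λ⟩)/t = λ. In particular, the limit depends on the choice of λ, so the conclusion of the selfadjoint convergence theorem fails for the non-selfadjoint generator L₁. -/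
open Filter Topology
open scoped InnerProductSpace ENNReal

set_option synthInstance.maxHeartbeats 1000000
set_option maxHeartbeats 1600000

noncomputable section

def evalCLM (k : ℕ) : ellTwo →L[ℝ] ℝ :=
  LinearMap.mkContinuous
    { toFun := fun x => x k
      map_add' := fun f g => congrFun (lp.coeFn_add f g) k
      map_smul' := fun c f => congrFun (lp.coeFn_smul c f) k }
    1 (fun x => by
      simpa using lp.norm_apply_le_norm (by norm_num : (2 : ℝ≥0∞) ≠ 0) x k)

lemma evalCLM_apply (k : ℕ) (x : ellTwo) : evalCLM k x = x k := rfl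

lemma summable_exp_apply (A : ellTwo →L[ℝ] ellTwo) (x : ellTwo) :
    Summable fun n : ℕ => (n.factorial : ℝ)⁻¹ • (A ^ n) x := by
  have h := NormedSpace.expSeries_summable' (𝕂 := ℝ) A
  have := h.map (ContinuousLinearMap.apply ℝ ellTwo x).toLinearMap.toAddMonoidHom
    (ContinuousLinearMap.apply ℝ ellTwo x).continuous
  simpa [Function.comp_def] using this

lemma exp_apply (A : ellTwo →L[ℝ] ellTwo) (x : ellTwo) :
    NormedSpace.exp A x = ∑' n : ℕ, (n.factorial : ℝ)⁻¹ • (A ^ n) x := by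
  rw [NormedSpace.exp_eq_tsum (𝕂 := ℝ)]
  have := (ContinuousLinearMap.apply ℝ ellTwo x).map_tsum
    (NormedSpace.expSeries_summable' (𝕂 := ℝ) A)
  simpa using this

lemma exp_apply_coord (A : ellTwo →L[ℝ] ellTwo) (x : ellTwo) (k : ℕ) :
    (NormedSpace.exp A x) k = ∑' n : ℕ, (n.factorial : ℝ)⁻¹ * (((A ^ n) x) k) := by
  rw [exp_apply]
  have := (evalCLM k).map_tsum (summable_exp_apply A x)
  simpa [evalCLM_apply, lp.coeFn_smul, Pi.smul_apply, smul_eq_mul] using this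

lemma summable_exp_coord (A : ellTwo →L[ℝ] ellTwo) (x : ellTwo) (k : ℕ) :
    Summable fun n : ℕ => (n.factorial : ℝ)⁻¹ * (((A ^ n) x) k) := by
  have := (summable_exp_apply A x).map (evalCLM k).toLinearMap.toAddMonoidHom
    (evalCLM k).continuous
  simpa [Function.comp_def, evalCLM_apply, lp.coeFn_smul, Pi.smul_apply, smul_eq_mul] using this

lemma exp_eigen (A : ellTwo →L[ℝ] ellTwo) (v : ellTwo) (c : ℝ) (h : A v = c • v) :
    NormedSpace.exp A v = Real.exp c • v := by
  have hpow : ∀ n : ℕ, (A ^ n) v = c ^ n • v := by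
    intro n
    induction n with
    | zero => simp
    | succ n ih =>
      rw [pow_succ, ContinuousLinearMap.mul_apply, h, map_smul, ih, smul_smul, pow_succ,
        mul_comm]
  rw [exp_apply]
  simp_rw [hpow, smul_smul]
  rw [Summable.tsum_smul_const]
  · congr 1
    rw [Real.exp_eq_exp_ℝ, NormedSpace.exp_eq_tsum (𝕂 := ℝ)]
    simp [smul_eq_mul]
  · have := NormedSpace.expSeries_summable' (𝕂 := ℝ) c
    simpa [smul_eq_mul] using this

/-- Let `L` be the left shift on `ℓ²(ℕ)`, let `μ ∈ (0, 1/2)`, let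
`y_μ := (μ^k)_{k∈ℕ}` and define the bounded operator `L₁` on `ℓ²(ℕ)` by `L₁ x := Lx + x₁ • y_μ`.
Then the semigroup `(e^{tL₁})_{t≥0}` is positivity improving, and for every `λ ∈ (2μ, 1)`,
`y_λ := (λ^k)_{k∈ℕ}`, and every positive `x ∈ ℓ²(ℕ)` (i.e. `x ≠ 0` with all entries `≥ 0`),
`lim_{t→∞} (log ⟪x, e^{tL₁} y_λ⟫)/t = λ`. In particular the limit depends on `λ`, so the
conclusion of the selfadjoint convergence theorem fails for the non-selfadjoint generator
`L₁`. -/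
theorem statement8 (μ : ℝ) (hμ : μ ∈ Set.Ioo (0 : ℝ) (1 / 2))
    (yμ : ellTwo) (hyμ : ∀ k : ℕ, yμ k = μ ^ (k + 1))
    (L : ellTwo →L[ℝ] ellTwo) (hL : ∀ (x : ellTwo) (k : ℕ), (L x) k = x (k + 1))
    (L₁ : ellTwo →L[ℝ] ellTwo) (hL₁ : ∀ x : ellTwo, L₁ x = L x + x 0 • yμ) :
    (∀ t : ℝ, 0 < t → ∀ x : ellTwo, (∀ k, 0 ≤ x k) → x ≠ 0 →
        ∀ k : ℕ, 0 < (NormedSpace.exp (t • L₁) x) k) ∧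
    (∀ lam : ℝ, lam ∈ Set.Ioo (2 * μ) 1 →
      ∀ ylam : ellTwo, (∀ k : ℕ, ylam k = lam ^ (k + 1)) →
      ∀ x : ellTwo, (∀ k, 0 ≤ x k) → x ≠ 0 →
        Tendsto (fun t : ℝ => Real.log ⟪x, NormedSpace.exp (t • L₁) ylam⟫_ℝ / t)
          atTop (𝓝 lam)) := by
  obtain ⟨hμ0, hμ2⟩ := hμ
  have hL₁c : ∀ (x : ellTwo) (k : ℕ), (L₁ x) k = x (k + 1) + x 0 * μ ^ (k + 1) := by
    intro x k
    rw [hL₁]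
    rw [lp.coeFn_add, lp.coeFn_smul, Pi.add_apply, Pi.smul_apply, smul_eq_mul, hL, hyμ]
  have hnonneg : ∀ x : ellTwo, (∀ k, 0 ≤ x k) → ∀ k, 0 ≤ (L₁ x) k := by
    intro x hx k
    rw [hL₁c]
    exact add_nonneg (hx _) (mul_nonneg (hx 0) (pow_nonneg hμ0.le _))
  have hpownn : ∀ (n : ℕ) (x : ellTwo), (∀ k, 0 ≤ x k) → ∀ k, 0 ≤ ((L₁ ^ n) x) k := by
    intro n
    induction n with
    | zero => intro x hx k; simpa using hx k
    | succ n ih =>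
      intro x hx k
      rw [pow_succ, ContinuousLinearMap.mul_apply]
      exact ih _ (hnonneg x hx) k
  have hshift : ∀ (n : ℕ) (x : ellTwo), (∀ k, 0 ≤ x k) → ∀ k, x (k + n) ≤ ((L₁ ^ n) x) k := by
    intro n
    induction n with
    | zero => intro x hx k; simp
    | succ n ih =>
      intro x hx k
      rw [pow_succ, ContinuousLinearMap.mul_apply]
      have h1 := ih (L₁ x) (hnonneg x hx) k
      have h2 : x (k + (n + 1)) ≤ (L₁ x) (k + n) := by
        rw [hL₁c]
        have := mul_nonneg (hx 0) (pow_nonneg hμ0.le (k + n + 1))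
        have hidx : k + (n + 1) = k + n + 1 := by ring
        rw [hidx]
        linarith
      exact h2.trans h1
  constructor
  · intro t ht x hx hx0 k
    obtain ⟨k₀, hk₀⟩ : ∃ k, 0 < x k := by
      by_contra hcon
      push_neg at hcon
      apply hx0
      apply lp.ext
      funext j
      have : x j = 0 := le_antisymm (hcon j) (hx j)
      simpa using this
    have hpos : ∀ j, 0 < ((L₁ ^ (k₀ + 1)) x) j := by
      intro j
      have h0 : x k₀ ≤ ((L₁ ^ k₀) x) 0 := by simpa using hshift k₀ x hx 0
      rw [pow_succ', ContinuousLinearMap.mul_apply, hL₁c]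
      have h1 := hpownn k₀ x hx (j + 1)
      have hμpos : 0 < μ ^ (j + 1) := pow_pos hμ0 _
      nlinarith
    rw [exp_apply_coord]
    refine Summable.tsum_pos (summable_exp_coord _ x k) ?_ (k₀ + 1) ?_
    · intro n
      rw [smul_pow, ContinuousLinearMap.smul_apply, lp.coeFn_smul, Pi.smul_apply, smul_eq_mul]
      have h1 : (0:ℝ) ≤ (n.factorial : ℝ)⁻¹ := by positivity
      have h2 : (0:ℝ) ≤ t ^ n := pow_nonneg ht.le n
      exact mul_nonneg h1 (mul_nonneg h2 (hpownn n x hx k))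
    · rw [smul_pow, ContinuousLinearMap.smul_apply, lp.coeFn_smul, Pi.smul_apply, smul_eq_mul]
      have h1 : (0:ℝ) < ((k₀ + 1).factorial : ℝ)⁻¹ := by positivity
      have h2 : (0:ℝ) < t ^ (k₀ + 1) := pow_pos ht _
      exact mul_pos h1 (mul_pos h2 (hpos k))
  · rintro lam ⟨hl2, hl1⟩ ylam hylam x hx hx0
    have hlam0 : 0 < lam := lt_trans (by positivity) hl2
    have hden : 0 < lam - 2 * μ := sub_pos.mpr hl2
    set c : ℝ := lam / (lam - 2 * μ) with hcdef
    have hc : 0 < c := div_pos hlam0 hden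
    have hceq : lam + 2 * μ * c = lam * c := by
      rw [hcdef]
      field_simp
      ring
    set v : ellTwo := ylam + c • yμ with hvdef
    have hv : ∀ k, v k = lam ^ (k + 1) + c * μ ^ (k + 1) := by
      intro k
      rw [hvdef, lp.coeFn_add, lp.coeFn_smul, Pi.add_apply, Pi.smul_apply, smul_eq_mul,
        hylam, hyμ]
    have hvpos : ∀ k, 0 < v k := by
      intro k
      rw [hv]
      have := pow_pos hlam0 (k + 1)
      have := pow_pos hμ0 (k + 1)
      nlinarith
    have hμy : L₁ yμ = (2 * μ) • yμ := by
      apply lp.ext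
      funext k
      rw [hL₁c]
      simp only [lp.coeFn_smul, Pi.smul_apply, smul_eq_mul, hyμ]
      ring
    have hvy : L₁ v = lam • v := by
      apply lp.ext
      funext k
      rw [hL₁c]
      simp only [lp.coeFn_smul, Pi.smul_apply, smul_eq_mul, hv]
      linear_combination (μ ^ (k + 1)) * hceq
    have hexpv : ∀ t : ℝ, NormedSpace.exp (t • L₁) v = Real.exp (t * lam) • v := by
      intro t
      exact exp_eigen _ v (t * lam)
        (by rw [ContinuousLinearMap.smul_apply, hvy, smul_smul])
    have hexpμ : ∀ t : ℝ, NormedSpace.exp (t • L₁) yμ = Real.exp (t * (2 * μ)) • yμ := by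
      intro t
      exact exp_eigen _ yμ (t * (2 * μ))
        (by rw [ContinuousLinearMap.smul_apply, hμy, smul_smul])
    have hylam_eq : ylam = v - c • yμ := by rw [hvdef]; abel
    obtain ⟨k₀, hk₀⟩ : ∃ k, 0 < x k := by
      by_contra hcon
      push_neg at hcon
      apply hx0
      apply lp.ext
      funext j
      have : x j = 0 := le_antisymm (hcon j) (hx j)
      simpa using this
    set a : ℝ := ⟪x, v⟫_ℝ with hadef
    set b : ℝ := ⟪x, yμ⟫_ℝ with hbdef
    have ha : 0 < a := by
      rw [hadef, lp.inner_eq_tsum]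
      refine Summable.tsum_pos (lp.summable_inner x v) ?_ k₀ ?_
      · intro i
        simp only [RCLike.inner_apply, conj_trivial]
        exact mul_nonneg (hvpos i).le (hx i)
      · simp only [RCLike.inner_apply, conj_trivial]
        exact mul_pos (hvpos k₀) hk₀
    set h : ℝ → ℝ := fun t => a - c * b * Real.exp ((2 * μ - lam) * t) with hhdef
    have hinner : ∀ t : ℝ, ⟪x, NormedSpace.exp (t • L₁) ylam⟫_ℝ
        = Real.exp (lam * t) * h t := by
      intro t
      rw [hylam_eq, map_sub, map_smul, hexpv, hexpμ, inner_sub_right,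
        real_inner_smul_right, real_inner_smul_right, ← hadef]
      have : ⟪x, Real.exp (t * (2 * μ)) • yμ⟫_ℝ = Real.exp (t * (2 * μ)) * b := by
        rw [real_inner_smul_right, hbdef]
      rw [this, hhdef]
      have hmul : Real.exp (lam * t) * Real.exp ((2 * μ - lam) * t)
          = Real.exp (t * (2 * μ)) := by
        rw [← Real.exp_add]; ring_nf
      have hlt : Real.exp (t * lam) = Real.exp (lam * t) := by ring_nf
      rw [hlt]
      show Real.exp (lam * t) * a - c * (Real.exp (t * (2 * μ)) * b)
        = Real.exp (lam * t) * (a - c * b * Real.exp ((2 * μ - lam) * t))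
      linear_combination (c * b) * hmul
    have hexp0 : Tendsto (fun t : ℝ => Real.exp ((2 * μ - lam) * t)) atTop (𝓝 0) := by
      have h1 : Tendsto (fun t : ℝ => (lam - 2 * μ) * t) atTop atTop :=
        Tendsto.const_mul_atTop hden tendsto_id
      have h2 := Real.tendsto_exp_neg_atTop_nhds_zero.comp h1
      refine h2.congr fun t => ?_
      simp only [Function.comp_apply]
      ring_nf
    have hht : Tendsto h atTop (𝓝 a) := by
      have := (tendsto_const_nhds (x := a) (f := atTop (α := ℝ))).sub
        ((tendsto_const_nhds (x := c * b) (f := atTop (α := ℝ))).mul hexp0)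
      simpa [hhdef] using this
    have hev : ∀ᶠ t in atTop, 0 < h t := hht.eventually (eventually_gt_nhds ha)
    have heq : ∀ᶠ t : ℝ in atTop,
        Real.log ⟪x, NormedSpace.exp (t • L₁) ylam⟫_ℝ / t = lam + Real.log (h t) / t := by
      filter_upwards [hev, eventually_gt_atTop (0:ℝ)] with t hhtpos ht0
      rw [hinner, Real.log_mul (Real.exp_ne_zero _) (ne_of_gt hhtpos), Real.log_exp,
        add_div, mul_div_assoc, div_self ht0.ne', mul_one]
    rw [tendsto_congr' heq]
    have hlog : Tendsto (fun t : ℝ => Real.log (h t) / t) atTop (𝓝 0) := by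
      have h1 : Tendsto (fun t : ℝ => Real.log (h t)) atTop (𝓝 (Real.log a)) :=
        ((Real.continuousAt_log ha.ne').tendsto).comp hht
      have := h1.mul tendsto_inv_atTop_zero
      simpa [div_eq_mul_inv] using this
    have := (tendsto_const_nhds (x := lam) (f := atTop (α := ℝ))).add hlog
    simpa using this
end
end

section
/- Let L be a selfadjoint operator in L²(X, m), bounded below, with E0 the infimum of the spectrum of L, and assume that the semigroup (e^{-tL})_{t≥0} has a kernel p satisfying (K1), (K2), (K3). Then there exists a unique measurable function Φ : X → [0, ∞) such that e^{tE0} p_t(x, y) → Φ(x) Φ(y) as t → ∞ for all x, y ∈ X. Moreover, if E0 is an eigenvalue of L, then Φ is a strictly positive (everywhere on X) normalized eigenfunction of L to the eigenvalue E0; if E0 is not an eigenvalue, then Φ vanishes everywhere. -/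
open MeasureTheory Filter Topology
open scoped InnerProductSpace ENNReal

noncomputable section

/-- `p` is a kernel of the semigroup `T = (e^{-tL})_{t>0}` on `L²(X, m)` in the sense of the
paper: a measurable function `p : (0,∞) × X × X → (0,∞)` with
`e^{-tL} f(x) = ∫ p_t(x,y) f(y) dm(y)` for a.e. `x`, satisfying (K1) symmetry,
(K2) `p_t(x,·) ∈ L²(X,m)`, and (K3) the Chapman–Kolmogorov identity. (The values of the Lean
function `p` at `t ≤ 0` are irrelevant.) -/
structure IsKernelOf {X : Type*} [MeasurableSpace X] (m : Measure X)
    (T : ℝ → Lp ℝ 2 m →L[ℝ] Lp ℝ 2 m) (p : ℝ → X → X → ℝ) : Prop where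
  meas : Measurable fun q : ℝ × X × X => p q.1 q.2.1 q.2.2
  pos : ∀ t : ℝ, 0 < t → ∀ x y : X, 0 < p t x y
  symm : ∀ t : ℝ, 0 < t → ∀ x y : X, p t x y = p t y x
  memL2 : ∀ t : ℝ, 0 < t → ∀ x : X, MemLp (p t x) 2 m
  chapman : ∀ t s : ℝ, 0 < t → 0 < s → ∀ x y : X,
      p (t + s) x y = ∫ z, p t x z * p s z y ∂m
  represents : ∀ t : ℝ, 0 < t → ∀ f : Lp ℝ 2 m,
      (T t f : X → ℝ) =ᵐ[m] fun x => ∫ y, p t x y * f y ∂m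

section Hilbert

variable {H : Type*} [NormedAddCommGroup H] [InnerProductSpace ℝ H] [CompleteSpace H]
variable {T : ℝ → H →L[ℝ] H} {ρ : H → Measure ℝ} {E0 : ℝ}

/-- the spectral function `h f t = e^{tE0}⟪f, T t f⟫` equals `∫ e^{t(E0-s)} dρ_f(s)`. -/
lemma aux_h_eq (hT : IsHeatSemigroupOf T ρ E0) (f : H) {t : ℝ} (ht : 0 ≤ t) :
    Real.exp (t * E0) * ⟪f, T t f⟫_ℝ = ∫ s, Real.exp (t * (E0 - s)) ∂(ρ f) := by
  rw [hT.inner_eq f t ht, ← integral_const_mul]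
  exact integral_congr_ae (Filter.Eventually.of_forall fun s => by
    show Real.exp (t * E0) * Real.exp (-(t * s)) = Real.exp (t * (E0 - s))
    rw [← Real.exp_add]
    congr 1
    ring)

lemma aux_tendsto_diag (hT : IsHeatSemigroupOf T ρ E0) (f : H) :
    Tendsto (fun t : ℝ => Real.exp (t * E0) * ⟪f, T t f⟫_ℝ) atTop
      (𝓝 ((ρ f {E0}).toReal)) := by
  have hfin : IsFiniteMeasure (ρ f) := ⟨lt_top_iff_ne_top.2 (hT.finite f)⟩
  have hae : ∀ᵐ s ∂(ρ f), E0 ≤ s := by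
    have h0 := hT.support_bddBelow f
    rw [ae_iff]
    convert h0 using 2
    ext s; simp [not_le, Set.mem_Iio]
  have key : Tendsto (fun t : ℝ => ∫ s, Real.exp (t * (E0 - s)) ∂(ρ f)) atTop
      (𝓝 (∫ s, Set.indicator {E0} (fun _ => (1:ℝ)) s ∂(ρ f))) := by
    apply tendsto_integral_filter_of_dominated_convergence (fun _ => (1:ℝ))
    · exact Filter.Eventually.of_forall fun t =>
        (Real.continuous_exp.comp (continuous_const.mul
          (continuous_const.sub continuous_id))).aestronglyMeasurable
    · filter_upwards [eventually_ge_atTop (0:ℝ)] with t ht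
      filter_upwards [hae] with s hs
      rw [Real.norm_eq_abs, abs_of_pos (Real.exp_pos _)]
      calc Real.exp (t * (E0 - s)) ≤ Real.exp 0 :=
            Real.exp_le_exp.2 (mul_nonpos_of_nonneg_of_nonpos ht (by linarith))
        _ = 1 := Real.exp_zero
    · exact integrable_const _
    · filter_upwards [hae] with s hs
      rcases eq_or_lt_of_le hs with h | h
      · have : s ∈ ({E0} : Set ℝ) := by simp [← h]
        rw [Set.indicator_of_mem this]
        simpa [← h] using tendsto_const_nhds (α := ℝ) (f := atTop) (a := (1:ℝ))
      · rw [Set.indicator_of_notMem (by simpa using (ne_of_gt h))]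
        have h1 : Tendsto (fun t : ℝ => t * (E0 - s)) atTop atBot :=
          Tendsto.atTop_mul_const_of_neg (by linarith) tendsto_id
        exact Real.tendsto_exp_atBot.comp h1
  have hind : ∫ s, Set.indicator {E0} (fun _ => (1:ℝ)) s ∂(ρ f) = (ρ f {E0}).toReal := by
    rw [integral_indicator_const (1:ℝ) (measurableSet_singleton E0)]
    simp
    rfl
  rw [← hind]
  apply key.congr'
  filter_upwards [eventually_ge_atTop (0:ℝ)] with t ht
  exact (aux_h_eq hT f ht).symm

lemma aux_inner_T (hT : IsHeatSemigroupOf T ρ E0) (f : H) {t s : ℝ} (ht : 0 ≤ t) (hs : 0 ≤ s) :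
    ⟪T t f, T s f⟫_ℝ = ⟪f, T (t + s) f⟫_ℝ := by
  rw [hT.symm t ht, hT.semigroup t s ht hs]
  rfl

lemma aux_exists_P (hT : IsHeatSemigroupOf T ρ E0) (f : H) :
    ∃ Pf : H, Tendsto (fun t : ℝ => Real.exp (t * E0) • T t f) atTop (𝓝 Pf) := by
  set v : ℝ → H := fun t => Real.exp (t * E0) • T t f with hv
  set h : ℝ → ℝ := fun t => Real.exp (t * E0) * ⟪f, T t f⟫_ℝ with hh
  have hinner : ∀ t s : ℝ, 0 ≤ t → 0 ≤ s → ⟪v t, v s⟫_ℝ = h (t + s) := by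
    intro t s ht hs
    simp only [hv, real_inner_smul_left, real_inner_smul_right]
    rw [aux_inner_T hT f ht hs, hh, ← mul_assoc, ← Real.exp_add]
    ring_nf
  have hnorm : ∀ t s : ℝ, 0 ≤ t → 0 ≤ s →
      ‖v t - v s‖ ^ 2 = h (t + t) + h (s + s) - 2 * h (t + s) := by
    intro t s ht hs
    rw [norm_sub_sq_real, ← real_inner_self_eq_norm_sq, ← real_inner_self_eq_norm_sq,
      hinner t t ht ht, hinner s s hs hs, hinner t s ht hs]
    ring
  have hcauchy : CauchySeq v := by
    rw [Metric.cauchySeq_iff]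
    intro ε hε
    have hc := aux_tendsto_diag hT f
    have hev : ∀ᶠ r in atTop, |h r - (ρ f {E0}).toReal| < ε ^ 2 / 4 := by
      have := Metric.tendsto_nhds.1 hc (ε ^ 2 / 4) (by positivity)
      simpa [Real.dist_eq] using this
    obtain ⟨M, hM⟩ := eventually_atTop.1 hev
    refine ⟨max M 0, fun t ht s hs => ?_⟩
    have ht0 : 0 ≤ t := le_trans (le_max_right M 0) ht
    have hs0 : 0 ≤ s := le_trans (le_max_right M 0) hs
    have htM : M ≤ t := le_trans (le_max_left M 0) ht
    have hsM : M ≤ s := le_trans (le_max_left M 0) hs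
    have h1 := hM (t + t) (by linarith)
    have h2 := hM (s + s) (by linarith)
    have h3 := hM (t + s) (by linarith)
    have hsq : ‖v t - v s‖ ^ 2 < ε ^ 2 := by
      rw [hnorm t s ht0 hs0]
      set c := (ρ f {E0}).toReal
      have : h (t+t) + h (s+s) - 2 * h (t+s)
          = (h (t+t) - c) + (h (s+s) - c) - 2 * (h (t+s) - c) := by ring
      rw [this]
      have a1 := abs_lt.1 h1
      have a2 := abs_lt.1 h2
      have a3 := abs_lt.1 h3
      nlinarith [sq_nonneg ε]
    rw [dist_eq_norm]
    nlinarith [norm_nonneg (v t - v s), sq_nonneg (‖v t - v s‖ - ε)]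
  exact cauchySeq_tendsto_of_complete hcauchy

lemma aux_inner_lim {f Pf : H}
    (hPf : Tendsto (fun t : ℝ => Real.exp (t * E0) • T t f) atTop (𝓝 Pf)) (a : H) :
    Tendsto (fun t : ℝ => Real.exp (t * E0) * ⟪a, T t f⟫_ℝ) atTop (𝓝 ⟪a, Pf⟫_ℝ) := by
  have h1 : Tendsto (fun t : ℝ => ⟪a, Real.exp (t * E0) • T t f⟫_ℝ) atTop (𝓝 ⟪a, Pf⟫_ℝ) :=
    Filter.Tendsto.inner tendsto_const_nhds hPf
  exact h1.congr fun t => by rw [real_inner_smul_right]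

lemma aux_P_eigen (hT : IsHeatSemigroupOf T ρ E0) {f Pf : H}
    (hPf : Tendsto (fun t : ℝ => Real.exp (t * E0) • T t f) atTop (𝓝 Pf))
    {s : ℝ} (hs : 0 ≤ s) : T s Pf = Real.exp (-(s * E0)) • Pf := by
  set v : ℝ → H := fun t => Real.exp (t * E0) • T t f with hv
  have h1 : Tendsto (fun t : ℝ => T s (v t)) atTop (𝓝 (T s Pf)) :=
    ((T s).continuous.tendsto _).comp hPf
  have h2 : Tendsto (fun t : ℝ => Real.exp (-(s * E0)) • v (s + t)) atTop
      (𝓝 (Real.exp (-(s * E0)) • Pf)) := by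
    apply Tendsto.const_smul
    exact hPf.comp (tendsto_atTop_add_const_left atTop s tendsto_id)
  refine tendsto_nhds_unique (h1.congr' ?_) h2
  filter_upwards [eventually_ge_atTop (0:ℝ)] with t ht
  show T s (Real.exp (t * E0) • T t f)
      = Real.exp (-(s * E0)) • Real.exp ((s + t) * E0) • T (s + t) f
  rw [_root_.map_smul, hT.semigroup s t hs ht, smul_smul]
  have : Real.exp (-(s * E0)) * Real.exp ((s + t) * E0) = Real.exp (t * E0) := by
    rw [← Real.exp_add]; congr 1; ring
  rw [this]
  rfl

end Hilbert

section L2X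

variable {X : Type*} [MeasurableSpace X] {m : Measure X} [SigmaFinite m]
variable {T : ℝ → Lp ℝ 2 m →L[ℝ] Lp ℝ 2 m} {ρ : Lp ℝ 2 m → Measure ℝ} {E0 : ℝ}
variable {p : ℝ → X → X → ℝ}

lemma aux_inner_L2 (f g : Lp ℝ 2 m) : ⟪f, g⟫_ℝ = ∫ x, f x * g x ∂m := by
  rw [L2.inner_def]
  exact integral_congr_ae (Filter.Eventually.of_forall fun x => by
    simp [RCLike.inner_apply, mul_comm])

lemma aux_integrable_mul (f g : Lp ℝ 2 m) : Integrable (fun x => f x * g x) m := by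
  have := L2.integrable_inner (𝕜 := ℝ) f g
  simpa [RCLike.inner_apply, mul_comm] using this

lemma aux_int_pos (hm : m ≠ 0) {f : X → ℝ} (hf : Integrable f m)
    (h1 : ∀ᵐ x ∂m, 0 < f x) : 0 < ∫ x, f x ∂m := by
  rw [integral_pos_iff_support_of_nonneg_ae (h1.mono fun x hx => hx.le) hf]
  by_contra hcon
  push_neg at hcon
  have hz : m (Function.support f) = 0 := le_antisymm hcon (zero_le)
  have h0 : ∀ᵐ x ∂m, f x = 0 := by
    rw [ae_iff]
    exact measure_mono_null (fun x hx => hx) hz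
  have hfalse : ∀ᵐ _x ∂m, False := by
    filter_upwards [h1, h0] with x hx1 hx2
    exact hx1.ne' hx2
  rw [ae_iff] at hfalse
  simp only [not_false_eq_true, Set.setOf_true] at hfalse
  exact hm (Measure.measure_univ_eq_zero.1 hfalse)

lemma aux_kernel_int_pos (hp : IsKernelOf m T p) (hm : m ≠ 0) {t : ℝ} (ht : 0 < t)
    {h : Lp ℝ 2 m} (hh0 : 0 ≤ᵐ[m] ⇑h) (hhne : ¬ (⇑h =ᵐ[m] 0)) (x : X) :
    0 < ∫ y, p t x y * h y ∂m := by
  have hint : Integrable (fun y => p t x y * h y) m := by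
    apply (aux_integrable_mul ((hp.memL2 t ht x).toLp (p t x)) h).congr
    filter_upwards [MemLp.coeFn_toLp (hp.memL2 t ht x)] with y hy
    rw [hy]
  have hnn : 0 ≤ᵐ[m] fun y => p t x y * h y := by
    filter_upwards [hh0] with y hy
    exact mul_nonneg (hp.pos t ht x y).le hy
  rw [integral_pos_iff_support_of_nonneg_ae hnn hint]
  have hsub : {y | h y ≠ 0} ⊆ Function.support fun y => p t x y * h y :=
    fun y hy => mul_ne_zero (hp.pos t ht x y).ne' hy
  have hpos : 0 < m {y | h y ≠ 0} := by
    rw [pos_iff_ne_zero]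
    intro hzero
    exact hhne (by rw [EventuallyEq, ae_iff]; simpa using hzero)
  exact lt_of_lt_of_le hpos (measure_mono hsub)

lemma aux_eig_pos (hp : IsKernelOf m T p) (hm : m ≠ 0) {v : Lp ℝ 2 m}
    (hv : T 1 v = Real.exp (-(1 * E0)) • v) (hv0 : 0 ≤ᵐ[m] ⇑v) (hvne : v ≠ 0) :
    ∀ᵐ x ∂m, 0 < v x := by
  have hrep := hp.represents 1 one_pos v
  rw [hv] at hrep
  have hsm := Lp.coeFn_smul (Real.exp (-(1 * E0))) v
  have hvne' : ¬ (⇑v =ᵐ[m] 0) := fun hcon => hvne (Lp.eq_zero_iff_ae_eq_zero.2 hcon)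
  filter_upwards [hrep, hsm] with x h1 h2
  have hpos : 0 < Real.exp (-(1 * E0)) * v x := by
    rw [← smul_eq_mul, ← Pi.smul_apply, ← h2, h1]
    exact aux_kernel_int_pos hp hm one_pos hv0 hvne' x
  rcases mul_pos_iff.1 hpos with ⟨_, h⟩ | ⟨h, _⟩
  · exact h
  · exact absurd h (not_lt.2 (Real.exp_pos _).le)

end L2X

section L2Y

variable {X : Type*} [MeasurableSpace X] {m : Measure X} [SigmaFinite m]
variable {T : ℝ → Lp ℝ 2 m →L[ℝ] Lp ℝ 2 m} {ρ : Lp ℝ 2 m → Measure ℝ} {E0 : ℝ}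
variable {p : ℝ → X × X → ℝ}

lemma aux_abs_eig {p : ℝ → X → X → ℝ} (hT : IsHeatSemigroupOf T ρ E0)
    (hp : IsKernelOf m T p) {v : Lp ℝ 2 m} (hvne : v ≠ 0)
    (hv : ∀ t : ℝ, 0 ≤ t → T t v = Real.exp (-(t * E0)) • v) :
    ∀ t : ℝ, 0 ≤ t → T t |v| = Real.exp (-(t * E0)) • |v| := by
  intro t ht0
  rcases eq_or_lt_of_le ht0 with ht | ht
  · rw [← ht, hT.map_zero]
    simp
  have hnv : (0:ℝ) < ‖v‖ := norm_pos_iff.2 hvne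
  have hnabs : ‖|v|‖ = ‖v‖ := norm_abs_eq_norm v
  have step1 : ⟪v, T t v⟫_ℝ = Real.exp (-(t * E0)) * ‖v‖ ^ 2 := by
    rw [hv t ht0, real_inner_smul_right, real_inner_self_eq_norm_sq]
  have step2 : ⟪v, T t v⟫_ℝ ≤ ⟪|v|, T t |v|⟫_ℝ := by
    rw [aux_inner_L2, aux_inner_L2]
    apply integral_mono_ae (aux_integrable_mul v (T t v)) (aux_integrable_mul |v| (T t |v|))
    have habs : ∀ᵐ x ∂m, (T t |v|) x = ∫ y, p t x y * |v y| ∂m := by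
      filter_upwards [hp.represents t ht |v|] with x hx
      rw [hx]
      exact integral_congr_ae (by
        filter_upwards [Lp.coeFn_abs v] with y hy
        rw [hy])
    filter_upwards [hp.represents t ht v, habs, Lp.coeFn_abs v] with x h1 h2 h3
    rw [h1, h2, h3]
    calc v x * ∫ y, p t x y * v y ∂m
        ≤ |v x * ∫ y, p t x y * v y ∂m| := le_abs_self _
      _ = |v x| * |∫ y, p t x y * v y ∂m| := abs_mul _ _
      _ ≤ |v x| * ∫ y, |p t x y * v y| ∂m := by
          apply mul_le_mul_of_nonneg_left _ (abs_nonneg _)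
          have hni := norm_integral_le_integral_norm (μ := m) (fun y => p t x y * v y)
          simp only [Real.norm_eq_abs] at hni
          exact hni
      _ = |v x| * ∫ y, p t x y * |v y| ∂m := by
          congr 1
          exact integral_congr_ae (Filter.Eventually.of_forall fun y => by
            show |p t x y * v y| = p t x y * |v y|
            rw [abs_mul, abs_of_pos (hp.pos t ht x y)])
  have step3 : ⟪|v|, T t |v|⟫_ℝ ≤ ‖|v|‖ * ‖T t |v|‖ := real_inner_le_norm _ _
  have step4 : ‖T t |v|‖ ≤ Real.exp (-(t * E0)) * ‖v‖ := by
    calc ‖T t |v|‖ ≤ ‖T t‖ * ‖|v|‖ := (T t).le_opNorm _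
      _ = Real.exp (-(t * E0)) * ‖v‖ := by rw [hT.norm_eq t ht0, hnabs]
  have e1 : ⟪|v|, T t |v|⟫_ℝ = ‖|v|‖ * ‖T t |v|‖ := by
    apply le_antisymm step3
    calc ‖|v|‖ * ‖T t |v|‖ ≤ ‖v‖ * (Real.exp (-(t * E0)) * ‖v‖) := by
          rw [hnabs]; exact mul_le_mul_of_nonneg_left step4 hnv.le
      _ = Real.exp (-(t * E0)) * ‖v‖ ^ 2 := by ring
      _ = ⟪v, T t v⟫_ℝ := step1.symm
      _ ≤ ⟪|v|, T t |v|⟫_ℝ := step2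
  have e2 : ‖T t |v|‖ = Real.exp (-(t * E0)) * ‖v‖ := by
    apply le_antisymm step4
    have h5 : Real.exp (-(t * E0)) * ‖v‖ ^ 2 ≤ ‖v‖ * ‖T t |v|‖ := by
      calc Real.exp (-(t * E0)) * ‖v‖ ^ 2 = ⟪v, T t v⟫_ℝ := step1.symm
        _ ≤ ⟪|v|, T t |v|⟫_ℝ := step2
        _ = ‖|v|‖ * ‖T t |v|‖ := e1
        _ = ‖v‖ * ‖T t |v|‖ := by rw [hnabs]
    nlinarith
  have e3 : ‖T t |v|‖ • |v| = ‖|v|‖ • T t |v| := inner_eq_norm_mul_iff_real.1 e1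
  rw [e2, hnabs] at e3
  have e4 : Real.exp (-(t * E0)) • |v| = T t |v| := by
    calc Real.exp (-(t * E0)) • |v|
        = (‖v‖⁻¹ * (Real.exp (-(t * E0)) * ‖v‖)) • |v| := by
          rw [mul_comm (Real.exp (-(t * E0))) ‖v‖, ← mul_assoc,
            inv_mul_cancel₀ hnv.ne', one_mul]
      _ = ‖v‖⁻¹ • ((Real.exp (-(t * E0)) * ‖v‖) • |v|) := (smul_smul _ _ _).symm
      _ = ‖v‖⁻¹ • (‖v‖ • T t |v|) := by rw [e3]
      _ = T t |v| := by rw [smul_smul, inv_mul_cancel₀ hnv.ne', one_smul]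
  exact e4.symm

end L2Y

section L2Z

variable {X : Type*} [MeasurableSpace X] {m : Measure X} [SigmaFinite m]
variable {T : ℝ → Lp ℝ 2 m →L[ℝ] Lp ℝ 2 m} {ρ : Lp ℝ 2 m → Measure ℝ} {E0 : ℝ}
variable {p : ℝ → X → X → ℝ}

lemma aux_eig_unique (hT : IsHeatSemigroupOf T ρ E0) (hp : IsKernelOf m T p)
    (hm : m ≠ 0) {u : Lp ℝ 2 m} (hu_norm : ‖u‖ = 1)
    (hu_eig : ∀ t : ℝ, 0 ≤ t → T t u = Real.exp (-(t * E0)) • u)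
    (hu_pos : ∀ᵐ x ∂m, 0 < u x)
    (v : Lp ℝ 2 m) (hv : ∀ t : ℝ, 0 ≤ t → T t v = Real.exp (-(t * E0)) • v) :
    v = ⟪u, v⟫_ℝ • u := by
  set w := v - ⟪u, v⟫_ℝ • u with hwdef
  have hw_eig : ∀ t : ℝ, 0 ≤ t → T t w = Real.exp (-(t * E0)) • w := by
    intro t ht
    rw [hwdef, map_sub, _root_.map_smul, hv t ht, hu_eig t ht,
      smul_comm (⟪u, v⟫_ℝ) (Real.exp (-(t * E0)))]
    exact (smul_sub _ _ _).symm
  have hwu : ⟪u, w⟫_ℝ = 0 := by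
    rw [hwdef, inner_sub_right, real_inner_smul_right, real_inner_self_eq_norm_sq,
      hu_norm]
    ring
  by_cases hw0 : w = 0
  · exact sub_eq_zero.1 hw0
  exfalso
  have habs := aux_abs_eig hT hp hw0 hw_eig
  have hsum : w⁺ + w⁺ = |w| + w := by
    calc w⁺ + w⁺ = (w⁺ + w⁻) + (w⁺ - w⁻) := by abel
      _ = |w| + w := by rw [posPart_add_negPart, posPart_sub_negPart]
  have hsumneg : w⁻ + w⁻ = |w| - w := by
    calc w⁻ + w⁻ = (w⁺ + w⁻) - (w⁺ - w⁻) := by abel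
      _ = |w| - w := by rw [posPart_add_negPart, posPart_sub_negPart]
  have hcancel : ∀ a b : Lp ℝ 2 m, a + a = b + b → a = b := by
    intro a b hab
    have h2 : (2:ℝ) • a = (2:ℝ) • b := by
      rw [two_smul, two_smul]; exact hab
    exact smul_right_injective (Lp ℝ 2 m) (two_ne_zero) h2
  have hpos_eig : ∀ t : ℝ, 0 ≤ t → T t (w⁺) = Real.exp (-(t * E0)) • w⁺ := by
    intro t ht
    apply hcancel
    calc T t w⁺ + T t w⁺ = T t (w⁺ + w⁺) := (map_add _ _ _).symm
      _ = T t (|w| + w) := by rw [hsum]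
      _ = Real.exp (-(t * E0)) • |w| + Real.exp (-(t * E0)) • w := by
          rw [map_add, habs t ht, hw_eig t ht]
      _ = Real.exp (-(t * E0)) • (|w| + w) := (smul_add _ _ _).symm
      _ = Real.exp (-(t * E0)) • (w⁺ + w⁺) := by rw [hsum]
      _ = Real.exp (-(t * E0)) • w⁺ + Real.exp (-(t * E0)) • w⁺ := smul_add _ _ _
  have hneg_eig : ∀ t : ℝ, 0 ≤ t → T t (w⁻) = Real.exp (-(t * E0)) • w⁻ := by
    intro t ht
    apply hcancel
    calc T t w⁻ + T t w⁻ = T t (w⁻ + w⁻) := (map_add _ _ _).symm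
      _ = T t (|w| - w) := by rw [hsumneg]
      _ = Real.exp (-(t * E0)) • |w| - Real.exp (-(t * E0)) • w := by
          rw [map_sub, habs t ht, hw_eig t ht]
      _ = Real.exp (-(t * E0)) • (|w| - w) := (smul_sub _ _ _).symm
      _ = Real.exp (-(t * E0)) • (w⁻ + w⁻) := by rw [hsumneg]
      _ = Real.exp (-(t * E0)) • w⁻ + Real.exp (-(t * E0)) • w⁻ := smul_add _ _ _
  have hposPart_nn : 0 ≤ᵐ[m] ⇑(w⁺) := (Lp.coeFn_nonneg _).2 (posPart_nonneg w)
  have hnegPart_nn : 0 ≤ᵐ[m] ⇑(w⁻) := (Lp.coeFn_nonneg _).2 (negPart_nonneg w)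
  have hcoe_pos : ⇑(w⁺) =ᵐ[m] fun x => max (w x) 0 := by
    rw [posPart_def]
    filter_upwards [Lp.coeFn_sup w 0, Lp.coeFn_zero ℝ 2 m] with x h1 h2
    rw [h1]
    simp only [Pi.sup_apply, Pi.zero_apply]
    rw [h2]
    simp
  have hcoe_neg : ⇑(w⁻) =ᵐ[m] fun x => max (-(w x)) 0 := by
    rw [negPart_def]
    filter_upwards [Lp.coeFn_sup (-w) 0, Lp.coeFn_zero ℝ 2 m, Lp.coeFn_neg w]
      with x h1 h2 h3
    rw [h1]
    simp only [Pi.sup_apply, Pi.zero_apply]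
    rw [h2, h3]
    simp
  have hinner_pos : ∀ z : Lp ℝ 2 m, (∀ᵐ x ∂m, 0 < z x) → 0 < ⟪u, z⟫_ℝ := by
    intro z hz
    rw [aux_inner_L2]
    apply aux_int_pos hm (aux_integrable_mul u z)
    filter_upwards [hu_pos, hz] with x h1 h2
    exact mul_pos h1 h2
  by_cases hp0 : w⁺ = 0
  · by_cases hn0 : w⁻ = 0
    · apply hw0
      have h := posPart_sub_negPart w
      rw [hp0, hn0, sub_zero] at h
      exact h.symm
    · have hwneg : w = -(w⁻) := by
        have h := posPart_sub_negPart w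
        rw [hp0, zero_sub] at h
        exact h.symm
      have hnpos : ∀ᵐ x ∂m, 0 < (w⁻) x :=
        aux_eig_pos hp hm (hneg_eig 1 zero_le_one) hnegPart_nn hn0
      have hip := hinner_pos _ hnpos
      rw [hwneg, inner_neg_right] at hwu
      linarith
  · by_cases hn0 : w⁻ = 0
    · have hwpos : w = w⁺ := by
        have h := posPart_sub_negPart w
        rw [hn0, sub_zero] at h
        exact h.symm
      have hppos : ∀ᵐ x ∂m, 0 < (w⁺) x :=
        aux_eig_pos hp hm (hpos_eig 1 zero_le_one) hposPart_nn hp0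
      have hip := hinner_pos _ hppos
      rw [hwpos] at hwu
      linarith
    · have hppos : ∀ᵐ x ∂m, 0 < (w⁺) x :=
        aux_eig_pos hp hm (hpos_eig 1 zero_le_one) hposPart_nn hp0
      have hnpos : ∀ᵐ x ∂m, 0 < (w⁻) x :=
        aux_eig_pos hp hm (hneg_eig 1 zero_le_one) hnegPart_nn hn0
      have hfalse : ∀ᵐ _x ∂m, False := by
        filter_upwards [hppos, hnpos, hcoe_pos, hcoe_neg] with x h1 h2 h3 h4
        rw [h3] at h1
        rw [h4] at h2
        rcases lt_max_iff.1 h1 with h | h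
        · rcases lt_max_iff.1 h2 with h' | h'
          · linarith
          · exact lt_irrefl 0 h'
        · exact lt_irrefl 0 h
      rw [ae_iff] at hfalse
      simp only [not_false_eq_true, Set.setOf_true] at hfalse
      exact hm (Measure.measure_univ_eq_zero.1 hfalse)

lemma aux_kernel_inner (hp : IsKernelOf m T p) {t : ℝ} (ht : 2 < t) (x y : X) :
    ⟪(hp.memL2 1 one_pos x).toLp (p 1 x), T (t - 2) ((hp.memL2 1 one_pos y).toLp (p 1 y))⟫_ℝ
      = p t x y := by
  have ht2 : (0:ℝ) < t - 2 := by linarith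
  have key : ∀ z : X,
      ∫ w, p (t - 2) z w * ((hp.memL2 1 one_pos y).toLp (p 1 y)) w ∂m = p (t - 1) z y := by
    intro z
    have h1 : ∫ w, p (t - 2) z w * ((hp.memL2 1 one_pos y).toLp (p 1 y)) w ∂m
        = ∫ w, p (t - 2) z w * p 1 w y ∂m := by
      apply integral_congr_ae
      filter_upwards [MemLp.coeFn_toLp (hp.memL2 1 one_pos y)] with w hw
      rw [hw]
      show p (t - 2) z w * p 1 y w = p (t - 2) z w * p 1 w y
      rw [hp.symm 1 one_pos y w]
    rw [h1, ← hp.chapman (t - 2) 1 ht2 one_pos z y,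
      show t - 2 + 1 = t - 1 by ring]
  rw [aux_inner_L2]
  calc ∫ z, ((hp.memL2 1 one_pos x).toLp (p 1 x)) z
        * (T (t - 2) ((hp.memL2 1 one_pos y).toLp (p 1 y))) z ∂m
      = ∫ z, p 1 x z * p (t - 1) z y ∂m := by
        apply integral_congr_ae
        filter_upwards [MemLp.coeFn_toLp (hp.memL2 1 one_pos x),
          hp.represents (t - 2) ht2 ((hp.memL2 1 one_pos y).toLp (p 1 y))] with z h1 h2
        rw [h1, h2, key z]
    _ = p (1 + (t - 1)) x y := (hp.chapman 1 (t - 1) one_pos (by linarith) x y).symm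
    _ = p t x y := by rw [show 1 + (t - 1) = t by ring]

end L2Z

/-- Let `L` be a selfadjoint operator in `L²(X, m)`, bounded below, with `E0`
the infimum of the spectrum of `L`, and assume that the semigroup `(e^{-tL})_{t≥0}` has a
kernel `p` satisfying (K1), (K2), (K3). Then there exists a unique measurable function
`Φ : X → [0, ∞)` such that `e^{tE0} p_t(x, y) → Φ(x) Φ(y)` as `t → ∞` for all `x, y ∈ X`.
Moreover, if `E0` is an eigenvalue of `L` (equivalently, `L` has an eigenvector `g ≠ 0` with
`e^{-tL} g = e^{-tE0} g` for all `t ≥ 0`), then `Φ` is a strictly positive (everywhere on `X`)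
normalized eigenfunction of `L` to the eigenvalue `E0`; if `E0` is not an eigenvalue, then `Φ`
vanishes everywhere. -/


theorem statement9 {X : Type*} [MeasurableSpace X] (m : Measure X) [SigmaFinite m]
    (T : ℝ → Lp ℝ 2 m →L[ℝ] Lp ℝ 2 m) (ρ : Lp ℝ 2 m → Measure ℝ) (E0 : ℝ)
    (hT : IsHeatSemigroupOf T ρ E0)
    (p : ℝ → X → X → ℝ) (hp : IsKernelOf m T p) :
    ∃ Φ : X → ℝ,
      (Measurable Φ ∧ (∀ x, 0 ≤ Φ x) ∧
        ∀ x y : X, Tendsto (fun t : ℝ => Real.exp (t * E0) * p t x y) atTop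
          (𝓝 (Φ x * Φ y))) ∧
      (∀ Ψ : X → ℝ, (Measurable Ψ ∧ (∀ x, 0 ≤ Ψ x) ∧
        ∀ x y : X, Tendsto (fun t : ℝ => Real.exp (t * E0) * p t x y) atTop
          (𝓝 (Ψ x * Ψ y))) → Ψ = Φ) ∧
      ((∃ g : Lp ℝ 2 m, g ≠ 0 ∧ ∀ t : ℝ, 0 ≤ t → T t g = Real.exp (-(t * E0)) • g) →
        (∀ x, 0 < Φ x) ∧ ∃ hΦ : MemLp Φ 2 m, ‖hΦ.toLp Φ‖ = 1 ∧
          ∀ t : ℝ, 0 ≤ t → T t (hΦ.toLp Φ) = Real.exp (-(t * E0)) • hΦ.toLp Φ) ∧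
      ((¬ ∃ g : Lp ℝ 2 m, g ≠ 0 ∧ ∀ t : ℝ, 0 ≤ t → T t g = Real.exp (-(t * E0)) • g) →
        ∀ x, Φ x = 0) := by
  have hshift : Tendsto (fun t : ℝ => t - 2) atTop atTop := by
    simpa [sub_eq_add_neg] using
      tendsto_atTop_add_const_right atTop (-2 : ℝ) tendsto_id
  by_cases hE : ∃ g : Lp ℝ 2 m, g ≠ 0 ∧ ∀ t : ℝ, 0 ≤ t → T t g = Real.exp (-(t * E0)) • g
  · obtain ⟨g, hg0, hg⟩ := hE
    have hm : m ≠ 0 := by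
      intro h0
      apply hg0
      subst h0
      apply Lp.eq_zero_iff_ae_eq_zero.2
      rw [Filter.EventuallyEq, MeasureTheory.ae_zero]
      simp
    have hgabs := aux_abs_eig hT hp hg0 hg
    have hgnorm : ‖g‖ ≠ 0 := norm_ne_zero_iff.2 hg0
    set u : Lp ℝ 2 m := ‖g‖⁻¹ • |g| with hu
    have hu_eig : ∀ t : ℝ, 0 ≤ t → T t u = Real.exp (-(t * E0)) • u := by
      intro t ht
      rw [hu, _root_.map_smul, hgabs t ht, smul_comm]
    have hu_norm : ‖u‖ = 1 := by
      rw [hu, norm_smul, norm_abs_eq_norm, norm_inv, norm_norm, inv_mul_cancel₀ hgnorm]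
    have hu_ne : u ≠ 0 := fun h => by simp [h] at hu_norm
    have hu_nn : 0 ≤ᵐ[m] ⇑u := by
      rw [hu]
      filter_upwards [Lp.coeFn_smul (‖g‖⁻¹ : ℝ) |g|, Lp.coeFn_abs g] with x h1 h2
      rw [h1]
      show 0 ≤ ‖g‖⁻¹ • (|g| : Lp ℝ 2 m) x
      rw [h2, smul_eq_mul]
      positivity
    have hu_pos : ∀ᵐ x ∂m, 0 < u x :=
      aux_eig_pos hp hm (hu_eig 1 zero_le_one) hu_nn hu_ne
    have hu_neae : ¬ (⇑u =ᵐ[m] 0) := fun hc => hu_ne (Lp.eq_zero_iff_ae_eq_zero.2 hc)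
    -- the limit of e^{tE0}⟪a, T t b⟫
    have hlim_inner : ∀ a b : Lp ℝ 2 m,
        Tendsto (fun t : ℝ => Real.exp (t * E0) * ⟪a, T t b⟫_ℝ) atTop
          (𝓝 (⟪u, a⟫_ℝ * ⟪u, b⟫_ℝ)) := by
      intro a b
      obtain ⟨Pb, hPb⟩ := aux_exists_P hT b
      have h1 := aux_inner_lim hPb a
      have hPb_eig : ∀ s : ℝ, 0 ≤ s → T s Pb = Real.exp (-(s * E0)) • Pb :=
        fun s hs => aux_P_eigen hT hPb hs
      have hPb_eq : Pb = ⟪u, Pb⟫_ℝ • u :=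
        aux_eig_unique hT hp hm hu_norm hu_eig hu_pos Pb hPb_eig
      have hub : ⟪u, Pb⟫_ℝ = ⟪u, b⟫_ℝ := by
        have h2 := aux_inner_lim hPb u
        have h3 : (fun t : ℝ => Real.exp (t * E0) * ⟪u, T t b⟫_ℝ) =ᶠ[atTop]
            fun _ => ⟪u, b⟫_ℝ := by
          filter_upwards [eventually_ge_atTop (0:ℝ)] with t ht
          rw [← hT.symm t ht u b, hu_eig t ht, real_inner_smul_left, ← mul_assoc,
            ← Real.exp_add, show t * E0 + -(t * E0) = 0 by ring, Real.exp_zero, one_mul]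
        exact tendsto_nhds_unique (h2.congr' h3) tendsto_const_nhds
      have hkey : ⟪a, Pb⟫_ℝ = ⟪u, a⟫_ℝ * ⟪u, b⟫_ℝ := by
        conv_lhs => rw [hPb_eq]
        rw [real_inner_smul_right, hub, real_inner_comm a u]
        ring
      rw [← hkey]
      exact h1
    set Φ : X → ℝ := fun z => Real.exp E0 * ⟪u, (hp.memL2 1 one_pos z).toLp (p 1 z)⟫_ℝ
      with hΦdef
    have hΦ_int : ∀ z, Φ z = Real.exp E0 * ∫ w, p 1 z w * u w ∂m := by
      intro z
      show Real.exp E0 * ⟪u, (hp.memL2 1 one_pos z).toLp (p 1 z)⟫_ℝ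
        = Real.exp E0 * ∫ w, p 1 z w * u w ∂m
      congr 1
      rw [aux_inner_L2]
      exact integral_congr_ae (by
        filter_upwards [MemLp.coeFn_toLp (hp.memL2 1 one_pos z)] with w hw
        show u w * ((hp.memL2 1 one_pos z).toLp (p 1 z)) w = p 1 z w * u w
        rw [hw, mul_comm])
    have hΦ_pos : ∀ z, 0 < Φ z := by
      intro z
      rw [hΦ_int z]
      exact mul_pos (Real.exp_pos _) (aux_kernel_int_pos hp hm one_pos hu_nn hu_neae z)
    have hΦ_meas : Measurable Φ := by
      have hΦ_eq : Φ = fun z => Real.exp E0 * ∫ w, p 1 z w * u w ∂m := funext hΦ_int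
      rw [hΦ_eq]
      have hker : Measurable fun q : X × X => p 1 q.1 q.2 :=
        hp.meas.comp (measurable_const.prodMk measurable_id)
      have hsm : StronglyMeasurable fun q : X × X => p 1 q.1 q.2 * u q.2 :=
        hker.stronglyMeasurable.mul
          ((Lp.stronglyMeasurable u).comp_measurable measurable_snd)
      exact (hsm.integral_prod_right'.measurable.const_mul _)
    have hΦu : Φ =ᵐ[m] ⇑u := by
      have h1 := hp.represents 1 one_pos u
      rw [hu_eig 1 zero_le_one] at h1
      filter_upwards [h1, Lp.coeFn_smul (Real.exp (-(1 * E0))) u] with z hz1 hz2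
      have hz3 : ∫ w, p 1 z w * u w ∂m = Real.exp (-(1 * E0)) * u z := by
        rw [← hz1, hz2]
        simp [smul_eq_mul]
      rw [hΦ_int z, hz3, ← mul_assoc, ← Real.exp_add,
        show E0 + -(1 * E0) = 0 by ring, Real.exp_zero, one_mul]
    have hMem : MemLp Φ 2 m := (Lp.memLp u).ae_eq hΦu.symm
    have htoLp : hMem.toLp Φ = u := by
      rw [← Lp.toLp_coeFn u (Lp.memLp u)]
      exact (MemLp.toLp_eq_toLp_iff _ _).2 hΦu
    have hlim : ∀ x y : X,
        Tendsto (fun t : ℝ => Real.exp (t * E0) * p t x y) atTop (𝓝 (Φ x * Φ y)) := by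
      intro x y
      have hmain := hlim_inner ((hp.memL2 1 one_pos x).toLp (p 1 x))
        ((hp.memL2 1 one_pos y).toLp (p 1 y))
      have hcomp := hmain.comp hshift
      have hconst := hcomp.const_mul (Real.exp (2 * E0))
      have hfin : Real.exp (2 * E0) * (⟪u, (hp.memL2 1 one_pos x).toLp (p 1 x)⟫_ℝ
          * ⟪u, (hp.memL2 1 one_pos y).toLp (p 1 y)⟫_ℝ) = Φ x * Φ y := by
        rw [hΦdef, show (2:ℝ) * E0 = E0 + E0 by ring, Real.exp_add]
        ring
      rw [← hfin]
      apply Tendsto.congr' _ hconst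
      filter_upwards [eventually_gt_atTop (2:ℝ)] with t ht
      show Real.exp (2 * E0) * (Real.exp ((t - 2) * E0)
          * ⟪(hp.memL2 1 one_pos x).toLp (p 1 x),
              T (t - 2) ((hp.memL2 1 one_pos y).toLp (p 1 y))⟫_ℝ)
        = Real.exp (t * E0) * p t x y
      rw [aux_kernel_inner hp ht x y, ← mul_assoc, ← Real.exp_add,
        show 2 * E0 + (t - 2) * E0 = t * E0 by ring]
    refine ⟨Φ, ⟨hΦ_meas, fun z => (hΦ_pos z).le, hlim⟩, ?_, ?_, ?_⟩
    · rintro Ψ ⟨hΨm, hΨ0, hΨlim⟩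
      funext z
      have heq := tendsto_nhds_unique (hΨlim z z) (hlim z z)
      rcases mul_self_eq_mul_self_iff.1 heq with h | h
      · exact h
      · have := hΨ0 z
        have := hΦ_pos z
        linarith
    · intro _
      refine ⟨hΦ_pos, hMem, ?_, ?_⟩
      · rw [htoLp]; exact hu_norm
      · intro t ht; rw [htoLp]; exact hu_eig t ht
    · intro hcon
      exact absurd ⟨g, hg0, hg⟩ hcon
  · -- E0 is not an eigenvalue
    have hlim : ∀ x y : X,
        Tendsto (fun t : ℝ => Real.exp (t * E0) * p t x y) atTop (𝓝 0) := by
      intro x y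
      obtain ⟨Pb, hPb⟩ := aux_exists_P hT ((hp.memL2 1 one_pos y).toLp (p 1 y))
      have hPb_eig : ∀ s : ℝ, 0 ≤ s → T s Pb = Real.exp (-(s * E0)) • Pb :=
        fun s hs => aux_P_eigen hT hPb hs
      have hPb0 : Pb = 0 := by
        by_contra hne
        exact hE ⟨Pb, hne, hPb_eig⟩
      have h1 := aux_inner_lim hPb ((hp.memL2 1 one_pos x).toLp (p 1 x))
      rw [hPb0, inner_zero_right] at h1
      have hcomp := h1.comp hshift
      have hconst := hcomp.const_mul (Real.exp (2 * E0))
      rw [mul_zero] at hconst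
      apply Tendsto.congr' _ hconst
      filter_upwards [eventually_gt_atTop (2:ℝ)] with t ht
      show Real.exp (2 * E0) * (Real.exp ((t - 2) * E0)
          * ⟪(hp.memL2 1 one_pos x).toLp (p 1 x),
              T (t - 2) ((hp.memL2 1 one_pos y).toLp (p 1 y))⟫_ℝ)
        = Real.exp (t * E0) * p t x y
      rw [aux_kernel_inner hp ht x y, ← mul_assoc, ← Real.exp_add,
        show 2 * E0 + (t - 2) * E0 = t * E0 by ring]
    refine ⟨fun _ => 0, ⟨measurable_const, fun _ => le_refl 0, ?_⟩, ?_, ?_, ?_⟩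
    · intro x y
      simpa using hlim x y
    · rintro Ψ ⟨hΨm, hΨ0, hΨlim⟩
      funext z
      have heq := tendsto_nhds_unique (hΨlim z z) (by simpa using hlim z z)
      exact mul_self_eq_zero.1 heq
    · intro h
      exact absurd h hE
    · intro _ _
      rfl
end
end

section
/- Let L be a selfadjoint operator in L²(X, m), bounded below, with E0 the infimum of the spectrum of L, and assume that the semigroup (e^{-tL})_{t≥0} has a kernel p satisfying (K1), (K2), (K3). Then for all x, y ∈ X, (log p_t(x, y))/t → −E0 as t → ∞. -/
open MeasureTheory Filter Topology
open scoped InnerProductSpace ENNReal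

noncomputable section

set_option linter.unusedSectionVars false
set_option maxHeartbeats 1000000
namespace Statement10Aux

variable {X : Type*} [MeasurableSpace X] {m : Measure X} [SigmaFinite m]
  {T : ℝ → Lp ℝ 2 m →L[ℝ] Lp ℝ 2 m} {ρ : Lp ℝ 2 m → Measure ℝ} {E0 : ℝ}
  {p : ℝ → X → X → ℝ}

lemma inner_eq_integral (f g : Lp ℝ 2 m) : ⟪f, g⟫_ℝ = ∫ z, f z * g z ∂m := by
  rw [MeasureTheory.L2.inner_def]
  simp [RCLike.inner_apply]
  exact integral_congr_ae (Filter.Eventually.of_forall fun _ => mul_comm _ _)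

lemma integrable_mul2 {a b : X → ℝ} (ha : MemLp a 2 m) (hb : MemLp b 2 m) :
    Integrable (fun z => a z * b z) m := by
  have h1 := MeasureTheory.L2.integrable_inner (𝕜 := ℝ) (ha.toLp a) (hb.toLp b)
  simp only [RCLike.inner_apply, RCLike.conj_to_real] at h1
  refine (Integrable.congr h1) ?_
  filter_upwards [ha.coeFn_toLp, hb.coeFn_toLp] with z h h' using by simp [h, h', mul_comm]

lemma T_apply_ae (hp : IsKernelOf m T p) {t : ℝ} (ht : 0 < t) (b : Lp ℝ 2 m)
    {g : X → ℝ} (hg : ⇑b =ᵐ[m] g) :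
    (T t b : X → ℝ) =ᵐ[m] fun z => ∫ w, p t z w * g w ∂m := by
  refine (hp.represents t ht b).trans (Filter.Eventually.of_forall fun z => ?_)
  exact integral_congr_ae (hg.mono fun w hw => by simp only [hw])

lemma T_toLp_ae (hp : IsKernelOf m T p) {t s : ℝ} (ht : 0 < t) (hs : 0 < s) (y : X) :
    (T t ((hp.memL2 s hs y).toLp (p s y)) : X → ℝ) =ᵐ[m] fun z => p (t + s) z y := by
  refine (T_apply_ae hp ht _ (MemLp.coeFn_toLp _)).trans (Filter.Eventually.of_forall fun z => ?_)
  have h : ∀ w, p s y w = p s w y := fun w => hp.symm s hs y w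
  simp_rw [h]
  exact (hp.chapman t s ht hs z y).symm

lemma inner_toLp_T (hp : IsKernelOf m T p) {t s s' : ℝ} (ht : 0 < t) (hs : 0 < s)
    (hs' : 0 < s') (x y : X) :
    ⟪(hp.memL2 s hs x).toLp (p s x), T t ((hp.memL2 s' hs' y).toLp (p s' y))⟫_ℝ
      = p (s + (t + s')) x y := by
  rw [inner_eq_integral]
  have h1 : ∫ z, ((hp.memL2 s hs x).toLp (p s x)) z
        * (T t ((hp.memL2 s' hs' y).toLp (p s' y))) z ∂m
      = ∫ z, p s x z * p (t + s') z y ∂m := by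
    refine integral_congr_ae ?_
    filter_upwards [MemLp.coeFn_toLp (hp.memL2 s hs x), T_toLp_ae hp ht hs' y] with z e1 e2
    rw [e1, e2]
  rw [h1]
  exact (hp.chapman s (t + s') hs (by positivity) x y).symm

lemma norm_toLp_sq (hp : IsKernelOf m T p) {s : ℝ} (hs : 0 < s) (x : X) :
    ‖(hp.memL2 s hs x).toLp (p s x)‖ ^ 2 = p (s + s) x x := by
  rw [← real_inner_self_eq_norm_sq, inner_eq_integral]
  have h1 : ∫ z, ((hp.memL2 s hs x).toLp (p s x)) z * ((hp.memL2 s hs x).toLp (p s x)) z ∂m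
      = ∫ z, p s x z * p s z x ∂m := by
    refine integral_congr_ae ?_
    filter_upwards [MemLp.coeFn_toLp (hp.memL2 s hs x)] with z e1
    rw [e1, hp.symm s hs x z]
  rw [h1]
  exact (hp.chapman s s hs hs x x).symm


lemma inner_T_mono (hp : IsKernelOf m T p) {t : ℝ} (ht : 0 < t) {a b a' b' : Lp ℝ 2 m}
    (ha' : 0 ≤ᵐ[m] ⇑a') (hb' : 0 ≤ᵐ[m] ⇑b')
    (haa : ⇑a' ≤ᵐ[m] ⇑a) (hbb : ⇑b' ≤ᵐ[m] ⇑b) :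
    ⟪a', T t b'⟫_ℝ ≤ ⟪a, T t b⟫_ℝ := by
  rw [inner_eq_integral, inner_eq_integral]
  have key : ∀ z : X, ∫ w, p t z w * b' w ∂m ≤ ∫ w, p t z w * b w ∂m := fun z =>
    integral_mono_ae (integrable_mul2 (hp.memL2 t ht z) (Lp.memLp b'))
      (integrable_mul2 (hp.memL2 t ht z) (Lp.memLp b))
      (hbb.mono fun w hw => mul_le_mul_of_nonneg_left hw (hp.pos t ht z w).le)
  have key0 : ∀ z : X, 0 ≤ ∫ w, p t z w * b' w ∂m := fun z =>
    integral_nonneg_of_ae (hb'.mono fun w hw => mul_nonneg (hp.pos t ht z w).le hw)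
  refine integral_mono_ae (integrable_mul2 (Lp.memLp a') (Lp.memLp (T t b')))
    (integrable_mul2 (Lp.memLp a) (Lp.memLp (T t b))) ?_
  filter_upwards [hp.represents t ht b', hp.represents t ht b, ha', haa] with z h1 h2 h3 h4
  rw [h1, h2]
  exact mul_le_mul h4 (key z) (key0 z) (le_trans h3 h4)

lemma inner_T_nonneg (hp : IsKernelOf m T p) {t : ℝ} (ht : 0 < t) {a b : Lp ℝ 2 m}
    (ha : 0 ≤ᵐ[m] ⇑a) (hb : 0 ≤ᵐ[m] ⇑b) : 0 ≤ ⟪a, T t b⟫_ℝ := by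
  rw [inner_eq_integral]
  refine integral_nonneg_of_ae ?_
  filter_upwards [hp.represents t ht b, ha] with z h1 h2
  rw [h1]
  exact mul_nonneg h2 (integral_nonneg_of_ae (hb.mono fun w hw =>
    mul_nonneg (hp.pos t ht z w).le hw))

lemma inner_T_le_abs (hp : IsKernelOf m T p) {t : ℝ} (ht : 0 < t) (g : Lp ℝ 2 m) :
    ⟪g, T t g⟫_ℝ ≤ ⟪|g|, T t |g|⟫_ℝ := by
  rw [inner_eq_integral, inner_eq_integral]
  refine integral_mono_ae (integrable_mul2 (Lp.memLp g) (Lp.memLp (T t g)))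
    (integrable_mul2 (Lp.memLp |g|) (Lp.memLp (T t |g|))) ?_
  filter_upwards [hp.represents t ht g, T_apply_ae hp ht |g| (Lp.coeFn_abs g),
    Lp.coeFn_abs g] with z h1 h2 h3
  rw [h1, h2, h3]
  calc (g : X → ℝ) z * ∫ w, p t z w * g w ∂m
      ≤ |(g : X → ℝ) z * ∫ w, p t z w * g w ∂m| := le_abs_self _
    _ = |(g : X → ℝ) z| * |∫ w, p t z w * g w ∂m| := abs_mul _ _
    _ ≤ |(g : X → ℝ) z| * ∫ w, p t z w * |g w| ∂m := by
        refine mul_le_mul_of_nonneg_left ?_ (abs_nonneg _)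
        have hb : |∫ w, p t z w * (g : X → ℝ) w ∂m|
            ≤ ∫ w, |p t z w * (g : X → ℝ) w| ∂m := by
          simpa [Real.norm_eq_abs, abs_mul] using
            MeasureTheory.norm_integral_le_integral_norm (μ := m)
              fun w => p t z w * (g : X → ℝ) w
        refine hb.trans ?_
        refine le_of_eq (integral_congr_ae (Filter.Eventually.of_forall fun w => ?_))
        simp only [abs_mul, abs_of_pos (hp.pos t ht z w)]


section Spectral
variable {ρ : Lp ℝ 2 m → Measure ℝ} {E0 : ℝ}

lemma rho_finite (hT : IsHeatSemigroupOf T ρ E0) (f : Lp ℝ 2 m) : IsFiniteMeasure (ρ f) :=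
  ⟨lt_top_iff_ne_top.2 (hT.finite f)⟩

lemma rho_ae_ge (hT : IsHeatSemigroupOf T ρ E0) (f : Lp ℝ 2 m) : ∀ᵐ s ∂(ρ f), E0 ≤ s := by
  rw [MeasureTheory.ae_iff]
  have h : {s : ℝ | ¬ E0 ≤ s} = Set.Iio E0 := by ext s; simp [not_le]
  rw [h]; exact hT.support_bddBelow f

lemma exp_integrable (hT : IsHeatSemigroupOf T ρ E0) (f : Lp ℝ 2 m) {t : ℝ} (ht : 0 ≤ t) :
    Integrable (fun s => Real.exp (-(t*s))) (ρ f) := by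
  haveI := rho_finite hT f
  refine Integrable.mono' (integrable_const (Real.exp (-(t*E0))))
    ((Real.continuous_exp.comp (continuous_const.mul continuous_id).neg).aestronglyMeasurable) ?_
  filter_upwards [rho_ae_ge hT f] with s hs
  rw [Real.norm_eq_abs, abs_of_pos (Real.exp_pos _)]
  exact Real.exp_le_exp.2 (by nlinarith)

lemma exp_mass_le_inner (hT : IsHeatSemigroupOf T ρ E0) (f : Lp ℝ 2 m) {t E1 : ℝ} (ht : 0 ≤ t) :
    Real.exp (-(t*E1)) * (ρ f (Set.Iio E1)).toReal ≤ ⟪f, T t f⟫_ℝ := by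
  haveI := rho_finite hT f
  rw [hT.inner_eq f t ht]
  have h0 : Real.exp (-(t*E1)) * (ρ f (Set.Iio E1)).toReal
      = ∫ _s in Set.Iio E1, Real.exp (-(t*E1)) ∂(ρ f) := by
    rw [setIntegral_const, smul_eq_mul, mul_comm]; rfl
  rw [h0]
  have h1 : ∫ _s in Set.Iio E1, Real.exp (-(t*E1)) ∂(ρ f)
      ≤ ∫ s in Set.Iio E1, Real.exp (-(t*s)) ∂(ρ f) := by
    refine setIntegral_mono_on (integrableOn_const (measure_ne_top _ _))
      ((exp_integrable hT f ht).integrableOn) measurableSet_Iio ?_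
    intro s hs
    simp only [Set.mem_Iio] at hs
    exact Real.exp_le_exp.2 (by nlinarith)
  exact h1.trans (setIntegral_le_integral (exp_integrable hT f ht)
    (Filter.Eventually.of_forall fun s => (Real.exp_pos _).le))

lemma inner_le_split (hT : IsHeatSemigroupOf T ρ E0) (f : Lp ℝ 2 m) {t E1 : ℝ} (ht : 0 ≤ t) :
    ⟪f, T t f⟫_ℝ ≤ Real.exp (-(t*E0)) * (ρ f (Set.Iio E1)).toReal
      + Real.exp (-(t*E1)) * (ρ f Set.univ).toReal := by
  haveI := rho_finite hT f
  rw [hT.inner_eq f t ht,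
    ← integral_add_compl (measurableSet_Iio (a := E1)) (exp_integrable hT f ht)]
  have hA : ∫ s in Set.Iio E1, Real.exp (-(t*s)) ∂(ρ f)
      ≤ Real.exp (-(t*E0)) * (ρ f (Set.Iio E1)).toReal := by
    have h1 : ∫ s in Set.Iio E1, Real.exp (-(t*s)) ∂(ρ f)
        ≤ ∫ _s in Set.Iio E1, Real.exp (-(t*E0)) ∂(ρ f) := by
      refine integral_mono_ae ((exp_integrable hT f ht).integrableOn)
        (integrableOn_const (measure_ne_top _ _)) ?_
      filter_upwards [ae_restrict_of_ae (rho_ae_ge hT f)] with s hs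
      exact Real.exp_le_exp.2 (by nlinarith)
    refine h1.trans (le_of_eq ?_)
    rw [setIntegral_const, smul_eq_mul, mul_comm]; rfl
  have hB : ∫ s in (Set.Iio E1)ᶜ, Real.exp (-(t*s)) ∂(ρ f)
      ≤ Real.exp (-(t*E1)) * (ρ f Set.univ).toReal := by
    have h2 : ∫ s in (Set.Iio E1)ᶜ, Real.exp (-(t*s)) ∂(ρ f)
        ≤ ∫ _s in (Set.Iio E1)ᶜ, Real.exp (-(t*E1)) ∂(ρ f) := by
      refine setIntegral_mono_on ((exp_integrable hT f ht).integrableOn)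
        (integrableOn_const (measure_ne_top _ _)) measurableSet_Iio.compl ?_
      intro s hs
      simp only [Set.mem_compl_iff, Set.mem_Iio, not_lt] at hs
      exact Real.exp_le_exp.2 (by nlinarith)
    refine h2.trans ?_
    rw [setIntegral_const, smul_eq_mul, mul_comm]
    exact mul_le_mul_of_nonneg_left
      (ENNReal.toReal_mono (hT.finite f) (measure_mono (Set.subset_univ _)))
      (Real.exp_pos _).le
  exact add_le_add hA hB

lemma norm_sq_eq_mass (hT : IsHeatSemigroupOf T ρ E0) (f : Lp ℝ 2 m) :
    ‖f‖^2 = (ρ f Set.univ).toReal := by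
  haveI := rho_finite hT f
  have h := hT.inner_eq f 0 le_rfl
  rw [hT.map_zero] at h
  simp only [zero_mul, neg_zero, Real.exp_zero, ContinuousLinearMap.one_apply,
    integral_const, smul_eq_mul, mul_one] at h
  rw [← real_inner_self_eq_norm_sq]
  exact h

lemma inner_T_self_eq (hT : IsHeatSemigroupOf T ρ E0) {t : ℝ} (ht : 0 ≤ t) (g : Lp ℝ 2 m) :
    ⟪g, T t g⟫_ℝ = ‖T (t/2) g‖^2 := by
  have h2 : (0:ℝ) ≤ t/2 := by linarith
  have hsg : T t = T (t/2) ∘L T (t/2) := by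
    have h := hT.semigroup (t/2) (t/2) h2 h2
    rw [← h]; norm_num
  rw [hsg]
  simp only [ContinuousLinearMap.comp_apply]
  rw [← hT.symm (t/2) h2 g (T (t/2) g), real_inner_self_eq_norm_sq]

lemma norm_abs_sq (g : Lp ℝ 2 m) : ‖(|g| : Lp ℝ 2 m)‖^2 = ‖g‖^2 := by
  rw [← real_inner_self_eq_norm_sq, ← real_inner_self_eq_norm_sq,
    inner_eq_integral, inner_eq_integral]
  refine integral_congr_ae ?_
  filter_upwards [Lp.coeFn_abs g] with z hz
  rw [hz]
  exact abs_mul_abs_self _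

lemma step1 (hT : IsHeatSemigroupOf T ρ E0) (hp : IsKernelOf m T p) {δ : ℝ} (hδ : 0 < δ) :
    ∃ h : Lp ℝ 2 m, (0 ≤ᵐ[m] ⇑h) ∧ ‖h‖ ≤ 1 ∧
      ∀ t : ℝ, 0 ≤ t → 1/2 * Real.exp (-(t*(E0+δ))) ≤ ⟪h, T t h⟫_ℝ := by
  set t₀ : ℝ := Real.log 4 / δ with ht₀def
  have hlog4 : 0 < Real.log 4 := Real.log_pos (by norm_num)
  have ht₀ : 0 ≤ t₀ := le_of_lt (div_pos hlog4 hδ)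
  have hexp4 : Real.exp (-(t₀*δ)) = 1/4 := by
    rw [ht₀def, div_mul_cancel₀ _ (ne_of_gt hδ), Real.exp_neg, Real.exp_log (by norm_num)]
    norm_num
  set q := Real.exp (-(t₀/2*E0)) with hqdef
  have hq : q^2 = Real.exp (-(t₀*E0)) := by
    rw [hqdef, sq, ← Real.exp_add]; ring_nf
  have hsq34 : Real.sqrt (3/4) ^ 2 = 3/4 := Real.sq_sqrt (by norm_num)
  have hsqnn : 0 ≤ Real.sqrt (3/4) := Real.sqrt_nonneg _
  have hr : Real.sqrt (3/4) * q < ‖T (t₀/2)‖ := by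
    rw [hT.norm_eq _ (by linarith)]
    have hqpos : 0 < q := Real.exp_pos _
    nlinarith
  obtain ⟨g, hgnorm, hgT⟩ := (T (t₀/2)).exists_lt_apply_of_lt_opNorm hr
  have hinner : 3/4 * Real.exp (-(t₀*E0)) < ⟪g, T t₀ g⟫_ℝ := by
    rw [inner_T_self_eq hT ht₀ g]
    have h0 : 0 ≤ Real.sqrt (3/4) * q := mul_nonneg hsqnn (Real.exp_pos _).le
    nlinarith
  haveI := rho_finite hT g
  have hMU : (ρ g (Set.Iio (E0+δ))).toReal ≤ (ρ g Set.univ).toReal :=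
    ENNReal.toReal_mono (hT.finite g) (measure_mono (Set.subset_univ _))
  have huniv : (ρ g Set.univ).toReal ≤ 1 := by
    rw [← norm_sq_eq_mass hT g]; nlinarith [norm_nonneg g]
  have hmass : (1:ℝ)/2 ≤ (ρ g (Set.Iio (E0+δ))).toReal := by
    have hsplit := inner_le_split hT g (E1 := E0+δ) ht₀
    have hexpsplit : Real.exp (-(t₀*(E0+δ))) = Real.exp (-(t₀*E0)) * Real.exp (-(t₀*δ)) := by
      rw [← Real.exp_add]; ring_nf
    have hMnn : 0 ≤ (ρ g (Set.Iio (E0+δ))).toReal := ENNReal.toReal_nonneg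
    have hUnn : 0 ≤ (ρ g Set.univ).toReal := ENNReal.toReal_nonneg
    have hepos : 0 < Real.exp (-(t₀*E0)) := Real.exp_pos _
    rw [hexpsplit, hexp4] at hsplit
    have h6 : Real.exp (-(t₀*E0)) * (1/4) * (ρ g Set.univ).toReal
        ≤ Real.exp (-(t₀*E0)) * (1/4) := by nlinarith
    nlinarith
  refine ⟨|g|, ?_, ?_, ?_⟩
  · filter_upwards [Lp.coeFn_abs g] with z hz
    rw [hz]; exact abs_nonneg _
  · have := norm_abs_sq g
    nlinarith [norm_nonneg (|g| : Lp ℝ 2 m), norm_nonneg g]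
  · intro t ht
    rcases eq_or_lt_of_le ht with rfl | htpos
    · have h1 : ⟪(|g| : Lp ℝ 2 m), T 0 |g|⟫_ℝ = ‖g‖^2 := by
        rw [hT.map_zero, ContinuousLinearMap.one_apply, real_inner_self_eq_norm_sq,
          norm_abs_sq g]
      rw [h1]
      have h2 : ‖g‖^2 = (ρ g Set.univ).toReal := norm_sq_eq_mass hT g
      simp only [zero_mul, neg_zero, Real.exp_zero, mul_one]
      nlinarith
    · calc 1/2 * Real.exp (-(t*(E0+δ)))
          ≤ Real.exp (-(t*(E0+δ))) * (ρ g (Set.Iio (E0+δ))).toReal := by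
            have h7 := mul_le_mul_of_nonneg_left hmass (Real.exp_pos (-(t*(E0+δ)))).le
            linarith
        _ ≤ ⟪g, T t g⟫_ℝ := exp_mass_le_inner hT g ht
        _ ≤ ⟪(|g| : Lp ℝ 2 m), T t |g|⟫_ℝ := inner_T_le_abs hp htpos g

end Spectral

lemma norm_toLp_le {h : Lp ℝ 2 m} {u : X → ℝ} (hu : MemLp u 2 m)
    (h1 : 0 ≤ᵐ[m] u) (h2 : u ≤ᵐ[m] ⇑h) :
    ‖hu.toLp u‖ ≤ ‖h‖ := by
  have hsq : ‖hu.toLp u‖^2 ≤ ‖h‖^2 := by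
    rw [← real_inner_self_eq_norm_sq, ← real_inner_self_eq_norm_sq,
      inner_eq_integral, inner_eq_integral]
    refine integral_mono_ae (integrable_mul2 (Lp.memLp _) (Lp.memLp _))
      (integrable_mul2 (Lp.memLp h) (Lp.memLp h)) ?_
    filter_upwards [hu.coeFn_toLp, h1, h2] with z e1 e2 e3
    rw [e1]
    exact mul_le_mul e3 e3 e2 (e2.trans e3)
  nlinarith [norm_nonneg (hu.toLp u), norm_nonneg h]

lemma lower_bound {ρ : Lp ℝ 2 m → Measure ℝ} {E0 : ℝ}
    (hT : IsHeatSemigroupOf T ρ E0) (hp : IsKernelOf m T p) (x y : X)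
    {δ : ℝ} (hδ : 0 < δ) :
    ∃ K : ℝ, 0 < K ∧ ∀ t : ℝ, 0 < t → K * Real.exp (-(t*(E0+δ))) ≤ p (t + 4) x y := by
  have hδ2 : 0 < δ/2 := by linarith
  obtain ⟨h, hpos, hnorm, hlow⟩ := step1 hT hp hδ2
  have h2pos : (0:ℝ) < 1 + 1 := by norm_num
  set Ψ : X → ℝ := fun z => min (p (1+1) x z) (p (1+1) y z) with hΨdef
  have hΨpos : ∀ z, 0 < Ψ z := fun z => lt_min (hp.pos _ h2pos x z) (hp.pos _ h2pos y z)
  have hmx : Measurable (fun z => p (1+1) x z) :=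
    hp.meas.comp (measurable_const.prodMk (measurable_const.prodMk measurable_id))
  have hmy : Measurable (fun z => p (1+1) y z) :=
    hp.meas.comp (measurable_const.prodMk (measurable_const.prodMk measurable_id))
  have hΨmeas : Measurable Ψ := hmx.min hmy
  have hhmeas : AEMeasurable (⇑h) m := (Lp.aestronglyMeasurable h).aemeasurable
  set u : ℕ → X → ℝ := fun n z => min (h z) ((n+1 : ℝ) * Ψ z) with hudef
  have humeas : ∀ n, AEMeasurable (u n) m := fun n =>
    hhmeas.min ((hΨmeas.const_mul _).aemeasurable)
  have humem : ∀ n, MemLp (u n) 2 m := fun n => by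
    refine (Lp.memLp h).mono (humeas n).aestronglyMeasurable ?_
    refine Filter.Eventually.of_forall fun z => ?_
    rw [Real.norm_eq_abs, Real.norm_eq_abs]
    have hnp : 0 < (n+1 : ℝ) * Ψ z := by
      have := hΨpos z; positivity
    simp only [hudef]
    rcases le_total (h z) ((n+1:ℝ) * Ψ z) with hc | hc
    · rw [min_eq_left hc]
    · rw [min_eq_right hc, abs_of_pos hnp]
      exact hc.trans (le_abs_self _)
  set Hn : ℕ → Lp ℝ 2 m := fun n => (humem n).toLp (u n) with hHndef
  have hHncoe : ∀ n, ⇑(Hn n) =ᵐ[m] u n := fun n => (humem n).coeFn_toLp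
  have hu_nonneg : ∀ n, 0 ≤ᵐ[m] u n := fun n => by
    filter_upwards [hpos] with z e2
    simp only [hudef]
    exact le_min e2 (mul_nonneg (by positivity) (hΨpos z).le)
  have hu_le_h : ∀ n, u n ≤ᵐ[m] ⇑h := fun n =>
    Filter.Eventually.of_forall fun z => by simp only [hudef]; exact min_le_left _ _
  have hHn_nonneg : ∀ n, 0 ≤ᵐ[m] ⇑(Hn n) := fun n => by
    filter_upwards [hHncoe n, hu_nonneg n] with z e1 e2
    rw [e1]; exact e2
  have hHn_norm : ∀ n, ‖Hn n‖ ≤ 1 := fun n =>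
    le_trans (norm_toLp_le (humem n) (hu_nonneg n) (hu_le_h n)) hnorm
  -- convergence of truncations
  have hF_tendsto : Tendsto (fun n => ∫ z, (h z - u n z)^2 ∂m) atTop (𝓝 0) := by
    have h0 : (𝓝 (0:ℝ)) = 𝓝 (∫ (_z : X), (0:ℝ) ∂m) := by simp
    rw [h0]
    refine tendsto_integral_of_dominated_convergence (fun z => h z * h z)
      (fun n => ((hhmeas.sub (humeas n)).pow_const 2).aestronglyMeasurable)
      (integrable_mul2 (Lp.memLp h) (Lp.memLp h)) (fun n => ?_) ?_
    · filter_upwards [hpos] with z e2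
      rw [Real.norm_eq_abs, abs_of_nonneg (sq_nonneg _)]
      have hmn : 0 ≤ u n z := by
        simp only [hudef]
        exact le_min e2 (mul_nonneg (by positivity) (hΨpos z).le)
      have hml : u n z ≤ h z := by simp only [hudef]; exact min_le_left _ _
      nlinarith
    · refine Filter.Eventually.of_forall fun z => ?_
      have hev : ∀ᶠ n in atTop, (h z - u n z)^2 = 0 := by
        obtain ⟨N, hN⟩ := exists_nat_ge ((h z) / Ψ z)
        refine Filter.eventually_atTop.2 ⟨N, fun n hn => ?_⟩
        have hcast : (h z) / Ψ z ≤ (n:ℝ) + 1 := by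
          refine hN.trans ?_
          have : (N:ℝ) ≤ (n:ℝ) := by exact_mod_cast hn
          linarith
        have hle : h z ≤ ((n:ℝ)+1) * Ψ z := (div_le_iff₀ (hΨpos z)).1 hcast
        simp only [hudef]
        rw [min_eq_left hle, sub_self]
        simp
      exact tendsto_const_nhds.congr' (hev.mono fun n hn => hn.symm)
  have hdiff_eq : ∀ n, ‖h - Hn n‖^2 = ∫ z, (h z - u n z)^2 ∂m := fun n => by
    rw [← real_inner_self_eq_norm_sq, inner_eq_integral]
    refine integral_congr_ae ?_
    filter_upwards [Lp.coeFn_sub h (Hn n), hHncoe n] with z e1 e2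
    rw [e1]
    simp only [Pi.sub_apply]
    rw [e2]; ring
  -- the time t₁ and the tolerance ε
  set t₁ : ℝ := 2 * Real.log 8 / δ with ht₁def
  have hlog8 : 0 < Real.log 8 := Real.log_pos (by norm_num)
  have ht₁ : 0 ≤ t₁ := by positivity
  have hexp8 : Real.exp (-(t₁*(δ/2))) = 1/8 := by
    have harr : t₁ * (δ/2) = Real.log 8 := by
      rw [ht₁def]; field_simp
    rw [harr, Real.exp_neg, Real.exp_log (by norm_num)]
    try norm_num
  set X1 := Real.exp (-(t₁*(E0+δ/2))) with hX1def
  have hX1pos : 0 < X1 := Real.exp_pos _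
  have hE := Real.exp_pos (-(t₁*E0))
  set ε := min 1 (X1 / (24 * Real.exp (-(t₁*E0)))) with hεdef
  have hεpos : 0 < ε := lt_min one_pos (by positivity)
  have hε1 : ε ≤ 1 := min_le_left _ _
  obtain ⟨n, hn⟩ := (hF_tendsto.eventually_lt_const (show (0:ℝ) < ε^2 by positivity)).exists
  have hdn : ‖h - Hn n‖ ≤ ε := by
    have h1 : ‖h - Hn n‖^2 < ε^2 := by rw [hdiff_eq n]; exact hn
    nlinarith [norm_nonneg (h - Hn n)]
  set d := h - Hn n with hddef
  have hexpand : ⟪h, T t₁ h⟫_ℝ = ⟪Hn n, T t₁ (Hn n)⟫_ℝ + ⟪Hn n, T t₁ d⟫_ℝ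
      + ⟪d, T t₁ (Hn n)⟫_ℝ + ⟪d, T t₁ d⟫_ℝ := by
    have hsum : h = Hn n + d := by rw [hddef]; abel
    conv_lhs => rw [hsum]
    rw [map_add, inner_add_left, inner_add_right, inner_add_right]
    ring
  have habs : ∀ a b : Lp ℝ 2 m, |⟪a, T t₁ b⟫_ℝ| ≤ ‖a‖ * (Real.exp (-(t₁*E0)) * ‖b‖) := by
    intro a b
    refine (abs_real_inner_le_norm a _).trans ?_
    have h1 := (T t₁).le_opNorm b
    rw [hT.norm_eq t₁ ht₁] at h1
    exact mul_le_mul_of_nonneg_left h1 (norm_nonneg a)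
  have herr1 : |⟪Hn n, T t₁ d⟫_ℝ| ≤ Real.exp (-(t₁*E0)) * ε := by
    refine (habs _ _).trans ?_
    calc ‖Hn n‖ * (Real.exp (-(t₁*E0)) * ‖d‖)
        ≤ 1 * (Real.exp (-(t₁*E0)) * ε) :=
          mul_le_mul (hHn_norm n) (mul_le_mul_of_nonneg_left hdn hE.le)
            (by positivity) one_pos.le
      _ = Real.exp (-(t₁*E0)) * ε := one_mul _
  have herr2 : |⟪d, T t₁ (Hn n)⟫_ℝ| ≤ Real.exp (-(t₁*E0)) * ε := by
    refine (habs _ _).trans ?_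
    calc ‖d‖ * (Real.exp (-(t₁*E0)) * ‖Hn n‖)
        ≤ ε * (Real.exp (-(t₁*E0)) * 1) :=
          mul_le_mul hdn (mul_le_mul_of_nonneg_left (hHn_norm n) hE.le)
            (by positivity) hεpos.le
      _ = Real.exp (-(t₁*E0)) * ε := by ring
  have herr3 : |⟪d, T t₁ d⟫_ℝ| ≤ Real.exp (-(t₁*E0)) * ε := by
    refine (habs _ _).trans ?_
    calc ‖d‖ * (Real.exp (-(t₁*E0)) * ‖d‖)
        ≤ ε * (Real.exp (-(t₁*E0)) * 1) := by
          refine mul_le_mul hdn (mul_le_mul_of_nonneg_left (hdn.trans hε1) hE.le)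
            (by positivity) hεpos.le
      _ = Real.exp (-(t₁*E0)) * ε := by ring
  have hεX : Real.exp (-(t₁*E0)) * ε ≤ X1 / 24 := by
    have h2 : ε ≤ X1 / (24 * Real.exp (-(t₁*E0))) := min_le_right _ _
    calc Real.exp (-(t₁*E0)) * ε
        ≤ Real.exp (-(t₁*E0)) * (X1 / (24 * Real.exp (-(t₁*E0)))) :=
          mul_le_mul_of_nonneg_left h2 hE.le
      _ = X1 / 24 := by field_simp
  have hHnlow : 3/8 * X1 ≤ ⟪Hn n, T t₁ (Hn n)⟫_ℝ := by
    have h1 := hlow t₁ ht₁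
    linarith [(le_abs_self ⟪Hn n, T t₁ d⟫_ℝ).trans herr1,
      (le_abs_self ⟪d, T t₁ (Hn n)⟫_ℝ).trans herr2,
      (le_abs_self ⟪d, T t₁ d⟫_ℝ).trans herr3,
      (neg_abs_le ⟪Hn n, T t₁ d⟫_ℝ), (neg_abs_le ⟪d, T t₁ (Hn n)⟫_ℝ),
      (neg_abs_le ⟪d, T t₁ d⟫_ℝ)]
  haveI := rho_finite hT (Hn n)
  have hUn : (ρ (Hn n) Set.univ).toReal ≤ 1 := by
    rw [← norm_sq_eq_mass hT (Hn n)]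
    nlinarith [hHn_norm n, norm_nonneg (Hn n)]
  have hUnn : 0 ≤ (ρ (Hn n) Set.univ).toReal := ENNReal.toReal_nonneg
  set Mn := (ρ (Hn n) (Set.Iio (E0+δ))).toReal with hMndef
  have hMn_nonneg : 0 ≤ Mn := ENNReal.toReal_nonneg
  have hsplit := inner_le_split hT (Hn n) (E1 := E0+δ) ht₁
  have hexpE0δ : Real.exp (-(t₁*(E0+δ))) = X1 * Real.exp (-(t₁*(δ/2))) := by
    rw [hX1def, ← Real.exp_add]; ring_nf
  rw [hexpE0δ, hexp8] at hsplit
  set c₀ := X1 / (4 * Real.exp (-(t₁*E0))) with hc₀def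
  have hc₀pos : 0 < c₀ := by positivity
  have hMnc : c₀ ≤ Mn := by
    have h8 : X1 * (1/8) * (ρ (Hn n) Set.univ).toReal ≤ X1 * (1/8) := by nlinarith
    have hEMn : X1/4 ≤ Real.exp (-(t₁*E0)) * Mn := by linarith
    rw [hc₀def, div_le_iff₀ (by positivity)]
    nlinarith
  refine ⟨c₀ / ((n+1:ℝ)^2), by positivity, fun t ht => ?_⟩
  have hmassbound := exp_mass_le_inner hT (Hn n) (E1 := E0+δ) ht.le
  set fx := (hp.memL2 1 one_pos x).toLp (p 1 x) with hfxdef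
  set fy := (hp.memL2 1 one_pos y).toLp (p 1 y) with hfydef
  have hTfx : ⇑(T 1 fx) =ᵐ[m] fun z => p (1+1) z x := T_toLp_ae hp one_pos one_pos x
  have hTfy : ⇑(T 1 fy) =ᵐ[m] fun z => p (1+1) z y := T_toLp_ae hp one_pos one_pos y
  have hN : (0:ℝ) ≤ (n+1:ℝ) := by positivity
  have hmono : ⟪Hn n, T t (Hn n)⟫_ℝ ≤ ⟪(n+1:ℝ) • T 1 fx, T t ((n+1:ℝ) • T 1 fy)⟫_ℝ := by
    refine inner_T_mono hp ht (hHn_nonneg n) (hHn_nonneg n) ?_ ?_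
    · filter_upwards [hHncoe n, Lp.coeFn_smul (n+1:ℝ) (T 1 fx), hTfx] with z e1 e2 e3
      rw [e1, e2]
      simp only [Pi.smul_apply, smul_eq_mul, e3]
      simp only [hudef]
      refine (min_le_right _ _).trans ?_
      have hxz : Ψ z ≤ p (1+1) z x := by
        rw [← hp.symm (1+1) h2pos x z]
        exact min_le_left _ _
      exact mul_le_mul_of_nonneg_left hxz hN
    · filter_upwards [hHncoe n, Lp.coeFn_smul (n+1:ℝ) (T 1 fy), hTfy] with z e1 e2 e3
      rw [e1, e2]
      simp only [Pi.smul_apply, smul_eq_mul, e3]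
      simp only [hudef]
      refine (min_le_right _ _).trans ?_
      have hyz : Ψ z ≤ p (1+1) z y := by
        rw [← hp.symm (1+1) h2pos y z]
        exact min_le_right _ _
      exact mul_le_mul_of_nonneg_left hyz hN
  have hsmul : ⟪(n+1:ℝ) • T 1 fx, T t ((n+1:ℝ) • T 1 fy)⟫_ℝ
      = (n+1:ℝ)^2 * ⟪T 1 fx, T t (T 1 fy)⟫_ℝ := by
    rw [(T t).map_smul, real_inner_smul_left, real_inner_smul_right]
    ring
  have hcompose : ⟪T 1 fx, T t (T 1 fy)⟫_ℝ = p (t + 4) x y := by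
    have e1 : T t (T 1 fy) = T (t+1) fy := by
      rw [hT.semigroup t 1 ht.le zero_le_one]; rfl
    have e2 : (1:ℝ) + (t+1) = t + 2 := by ring
    have e3 : T 1 (T (t+1) fy) = T (t+2) fy := by
      have h5 := hT.semigroup 1 (t+1) zero_le_one (by linarith)
      rw [e2] at h5
      rw [h5]; rfl
    rw [e1, hT.symm 1 zero_le_one fx (T (t+1) fy), e3]
    have h4 := inner_toLp_T hp (t := t+2) (by linarith) one_pos one_pos x y
    have e4 : (1:ℝ) + ((t+2) + 1) = t + 4 := by ring
    rw [e4] at h4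
    exact h4
  rw [hsmul, hcompose] at hmono
  have hchain : Real.exp (-(t*(E0+δ))) * c₀ ≤ (n+1:ℝ)^2 * p (t+4) x y := by
    have h6 : Real.exp (-(t*(E0+δ))) * c₀ ≤ Real.exp (-(t*(E0+δ))) * Mn :=
      mul_le_mul_of_nonneg_left hMnc (Real.exp_pos _).le
    linarith
  rw [div_mul_eq_mul_div, div_le_iff₀ (by positivity)]
  nlinarith [hchain]


lemma norm_toLp_pos (hp : IsKernelOf m T p) (x : X) :
    0 < ‖(hp.memL2 1 one_pos x).toLp (p 1 x)‖ := by
  have h := norm_toLp_sq hp one_pos x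
  have h2 : (0:ℝ) < p (1+1) x x := hp.pos (1+1) (by norm_num) x x
  nlinarith [norm_nonneg ((hp.memL2 1 one_pos x).toLp (p 1 x))]

lemma upper_bound {ρ : Lp ℝ 2 m → Measure ℝ} {E0 : ℝ}
    (hT : IsHeatSemigroupOf T ρ E0) (hp : IsKernelOf m T p) (x y : X)
    {t : ℝ} (ht : 0 < t) :
    p (t + 2) x y ≤ ‖(hp.memL2 1 one_pos x).toLp (p 1 x)‖
      * ‖(hp.memL2 1 one_pos y).toLp (p 1 y)‖ * Real.exp (-(t*E0)) := by
  have hi := inner_toLp_T hp ht one_pos one_pos x y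
  have e : (1:ℝ) + (t + 1) = t + 2 := by ring
  rw [e] at hi
  rw [← hi]
  set fx := (hp.memL2 1 one_pos x).toLp (p 1 x)
  set fy := (hp.memL2 1 one_pos y).toLp (p 1 y)
  calc ⟪fx, T t fy⟫_ℝ ≤ ‖fx‖ * ‖T t fy‖ := real_inner_le_norm _ _
    _ ≤ ‖fx‖ * (Real.exp (-(t*E0)) * ‖fy‖) := by
        have h1 := (T t).le_opNorm fy
        rw [hT.norm_eq t ht.le] at h1
        exact mul_le_mul_of_nonneg_left h1 (norm_nonneg _)
    _ = ‖fx‖ * ‖fy‖ * Real.exp (-(t*E0)) := by ring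

end Statement10Aux

/-- Let `L` be a selfadjoint operator in `L²(X, m)`, bounded below, with `E0`
the infimum of the spectrum of `L`, and assume that the semigroup `(e^{-tL})_{t≥0}` has a
kernel `p` satisfying (K1), (K2), (K3). Then for all `x, y ∈ X`,
`(log p_t(x, y))/t → -E0` as `t → ∞`. -/
theorem statement10 {X : Type*} [MeasurableSpace X] (m : Measure X) [SigmaFinite m]
    (T : ℝ → Lp ℝ 2 m →L[ℝ] Lp ℝ 2 m) (ρ : Lp ℝ 2 m → Measure ℝ) (E0 : ℝ)
    (hT : IsHeatSemigroupOf T ρ E0)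
    (p : ℝ → X → X → ℝ) (hp : IsKernelOf m T p) :
    ∀ x y : X, Tendsto (fun t : ℝ => Real.log (p t x y) / t) atTop (𝓝 (-E0)) := by
  intro x y
  have hCx := Statement10Aux.norm_toLp_pos hp x
  have hCy := Statement10Aux.norm_toLp_pos hp y
  set Cx := ‖(hp.memL2 1 one_pos x).toLp (p 1 x)‖ with hCxdef
  set Cy := ‖(hp.memL2 1 one_pos y).toLp (p 1 y)‖ with hCydef
  rw [tendsto_order]
  constructor
  · intro a ha
    have hδ : 0 < (-E0 - a)/2 := by linarith
    obtain ⟨K, hK, hbound⟩ := Statement10Aux.lower_bound hT hp x y hδ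
    have htend : Tendsto (fun u : ℝ =>
        (Real.log K + 4*(E0+(-E0 - a)/2))/u - (E0+(-E0 - a)/2)) atTop
        (𝓝 (0 - (E0+(-E0 - a)/2))) :=
      (Filter.Tendsto.const_div_atTop tendsto_id _).sub_const _
    have hlt : a < 0 - (E0+(-E0 - a)/2) := by linarith
    filter_upwards [htend.eventually_const_lt hlt, eventually_gt_atTop (4:ℝ)]
      with u hu1 hu4
    have hu0 : (0:ℝ) < u := by linarith
    have hb := hbound (u - 4) (by linarith)
    have e : u - 4 + 4 = u := by ring
    rw [e] at hb
    have hppos : 0 < p u x y := hp.pos u hu0 x y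
    have hKexp : 0 < K * Real.exp (-((u-4)*(E0+(-E0 - a)/2))) := by positivity
    have hlog : Real.log K + (-((u-4)*(E0+(-E0 - a)/2))) ≤ Real.log (p u x y) := by
      have h5 := (Real.log_le_log_iff hKexp hppos).2 hb
      rwa [Real.log_mul (ne_of_gt hK) (Real.exp_ne_zero _), Real.log_exp] at h5
    have hdiv : (Real.log K + 4*(E0+(-E0 - a)/2))/u - (E0+(-E0 - a)/2)
        ≤ Real.log (p u x y) / u := by
      have h2 : (Real.log K + 4*(E0+(-E0 - a)/2)) - u*(E0+(-E0 - a)/2)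
          ≤ Real.log (p u x y) := by nlinarith [hlog]
      calc (Real.log K + 4*(E0+(-E0 - a)/2))/u - (E0+(-E0 - a)/2)
          = ((Real.log K + 4*(E0+(-E0 - a)/2)) - u*(E0+(-E0 - a)/2))/u := by
            field_simp
        _ ≤ Real.log (p u x y)/u := (div_le_div_iff_of_pos_right hu0).2 h2
    exact lt_of_lt_of_le hu1 hdiv
  · intro b hb
    have htend : Tendsto (fun u : ℝ => (Real.log (Cx*Cy) + 2*E0)/u - E0) atTop
        (𝓝 (0 - E0)) :=
      (Filter.Tendsto.const_div_atTop tendsto_id _).sub_const _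
    have hlt : 0 - E0 < b := by linarith
    filter_upwards [htend.eventually_lt_const hlt, eventually_gt_atTop (2:ℝ)]
      with u hu1 hu2
    have hu0 : (0:ℝ) < u := by linarith
    have hb2 := Statement10Aux.upper_bound hT hp x y (t := u - 2) (by linarith)
    have e : u - 2 + 2 = u := by ring
    rw [e] at hb2
    have hppos : 0 < p u x y := hp.pos u hu0 x y
    have hlog : Real.log (p u x y) ≤ Real.log (Cx*Cy) + (-((u-2)*E0)) := by
      have h3 := (Real.log_le_log_iff hppos (by positivity)).2 hb2
      rwa [Real.log_mul (by positivity) (Real.exp_ne_zero _), Real.log_exp,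
        ← hCxdef, ← hCydef] at h3
    have hdiv : Real.log (p u x y)/u ≤ (Real.log (Cx*Cy) + 2*E0)/u - E0 := by
      have h2 : Real.log (p u x y) ≤ (Real.log (Cx*Cy) + 2*E0) - u*E0 := by
        nlinarith [hlog]
      calc Real.log (p u x y)/u
          ≤ ((Real.log (Cx*Cy) + 2*E0) - u*E0)/u := (div_le_div_iff_of_pos_right hu0).2 h2
        _ = (Real.log (Cx*Cy) + 2*E0)/u - E0 := by field_simp
    exact lt_of_le_of_lt hdiv hu1
end
end
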